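/- arXiv:1207.3771 — 5 statements merged into one kernel-verified Lean document; each statement's English description precedes it below -/
import Mathlib

section
/- The extremal number for P_4 satisfies: ex(n, P_4) = n if n ≡ 0 (mod 3), and ex(n, P_4) = n - 1 if n ≡ 1 or 2 (mod 3), for all n ≥ 3. -/
open SimpleGraph

/-- `G` contains a copy of `H` (an injective graph homomorphism from `H` to `G`). -/
def Contains {V W : Type*} (G : SimpleGraph V) (H : SimpleGraph W) : Prop :=
  ∃ f : H →g G, Function.Injective f

/-- The subgraph of `K_N` formed by the edges of color `i` under the edge coloring `c`. -/
def colorClass {N k : ℕ} (c : Sym2 (Fin N) → Fin k) (i : Fin k) : SimpleGraph (Fin N) :=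
  SimpleGraph.fromRel (fun u v => c s(u, v) = i)

/-- Every 2-coloring of the edges of `K_N` yields a copy of `G₀` in color 0 or `G₁` in color 1. -/
def ramseyProp2 {V W : Type*} (N : ℕ) (G₀ : SimpleGraph V) (G₁ : SimpleGraph W) : Prop :=
  ∀ c : Sym2 (Fin N) → Fin 2,
    Contains (colorClass c 0) G₀ ∨ Contains (colorClass c 1) G₁

/-- Every 3-coloring of the edges of `K_N` yields a copy of `Gᵢ` in color `i` for some `i`. -/
def ramseyProp3 {V W X : Type*} (N : ℕ) (G₀ : SimpleGraph V) (G₁ : SimpleGraph W)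
    (G₂ : SimpleGraph X) : Prop :=
  ∀ c : Sym2 (Fin N) → Fin 3,
    Contains (colorClass c 0) G₀ ∨ Contains (colorClass c 1) G₁ ∨ Contains (colorClass c 2) G₂

/-- `k·K₂`: a matching consisting of `k` disjoint edges. -/
def matchingGraph (k : ℕ) : SimpleGraph (Fin k × Fin 2) :=
  SimpleGraph.fromRel (fun u v => u.1 = v.1)

set_option linter.unusedSectionVars false
set_option linter.unusedVariables false

lemma chain {V : Type*} {G : SimpleGraph V} (h : ¬ Contains G (SimpleGraph.pathGraph 4))
    {x a v b : V} (hxa : G.Adj x a) (hav : G.Adj a v) (hvb : G.Adj v b)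
    (hxv : x ≠ v) (hxb : x ≠ b) (hab : a ≠ b) : False := by
  apply h
  have hmap : ∀ i j : Fin 4, (SimpleGraph.pathGraph 4).Adj i j →
      G.Adj (![x, a, v, b] i) (![x, a, v, b] j) := by
    intro i j hij
    rw [SimpleGraph.pathGraph_adj] at hij
    fin_cases i <;> fin_cases j <;> simp_all <;> first
      | exact hxa | exact hxa.symm | exact hav | exact hav.symm | exact hvb | exact hvb.symm
  have hinj : Function.Injective ![x, a, v, b] := by
    have hxA := hxa.ne
    have haV := hav.ne
    have hvB := hvb.ne
    intro i j hij
    fin_cases i <;> fin_cases j <;> simp_all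
  exact ⟨⟨![x, a, v, b], fun {i j} => hmap i j⟩, hinj⟩

section Upper
variable {V : Type*} [Fintype V] [DecidableEq V] {G : SimpleGraph V} [DecidableRel G.Adj]

lemma L1 (hP : ¬ Contains G (SimpleGraph.pathGraph 4)) {v a b x : V}
    (hva : G.Adj v a) (hvb : G.Adj v b) (hab : a ≠ b) (hax : G.Adj a x) :
    x = v ∨ x = b := by
  by_contra hc
  push_neg at hc
  exact chain hP hax.symm hva.symm hvb hc.1 hc.2 hab

lemma deg_ge_two {v a b : V} (hva : G.Adj v a) (hvb : G.Adj v b) (hab : a ≠ b) :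
    2 ≤ G.degree v := by
  rw [← SimpleGraph.card_neighborFinset_eq_degree]
  have : ({a, b} : Finset V) ⊆ G.neighborFinset v := by
    intro x hx
    simp only [Finset.mem_insert, Finset.mem_singleton] at hx
    rcases hx with rfl | rfl <;> simp [hva, hvb]
  calc 2 = ({a, b} : Finset V).card := by rw [Finset.card_insert_of_notMem (by simp [hab]), Finset.card_singleton]
  _ ≤ _ := Finset.card_le_card this

lemma deg_one_unique {u v w : V} (h1 : G.degree u = 1) (hv : G.Adj u v) (hw : G.Adj u w) :
    v = w := by
  by_contra hne
  have := deg_ge_two hv hw hne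
  omega

lemma exists_two_neighbors {v : V} (h : 2 ≤ G.degree v) :
    ∃ a b, G.Adj v a ∧ G.Adj v b ∧ a ≠ b := by
  rw [← SimpleGraph.card_neighborFinset_eq_degree] at h
  obtain ⟨a, ha, b, hb, hab⟩ := Finset.one_lt_card.mp h
  exact ⟨a, b, (G.mem_neighborFinset v a).mp ha, (G.mem_neighborFinset v b).mp hb, hab⟩

/-- edge with both endpoints of degree ≥ 2 lies in a triangle -/
lemma tri (hP : ¬ Contains G (SimpleGraph.pathGraph 4)) {u v : V} (huv : G.Adj u v)
    (hu : 2 ≤ G.degree u) (hv : 2 ≤ G.degree v) : ∃ w, G.Adj w u ∧ G.Adj w v := by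
  obtain ⟨a, b, ha, hb, hab⟩ := exists_two_neighbors hu
  -- some neighbor w of u with w ≠ v
  obtain ⟨w, hw, hwv⟩ : ∃ w, G.Adj u w ∧ w ≠ v := by
    by_cases hav : a = v
    · exact ⟨b, hb, fun h => hab (hav ▸ h ▸ rfl)⟩
    · exact ⟨a, ha, hav⟩
  -- N(v) ⊆ {u, w}; v has a neighbor ≠ u, so v adj w
  obtain ⟨c, d, hc, hd, hcd⟩ := exists_two_neighbors hv
  obtain ⟨y, hy, hyu⟩ : ∃ y, G.Adj v y ∧ y ≠ u := by
    by_cases hcu : c = u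
    · exact ⟨d, hd, fun h => hcd (hcu ▸ h ▸ rfl)⟩
    · exact ⟨c, hc, hcu⟩
  have := L1 hP huv hw hwv.symm hy
  rcases this with h | h
  · exact absurd h hyu
  · exact ⟨w, hw.symm, h ▸ hy.symm⟩

open Classical in
/-- charge an edge to a vertex: a degree-1 endpoint if one exists, else the opposite triangle vertex -/
noncomputable def charge (G : SimpleGraph V) [DecidableRel G.Adj] (e : Sym2 V) : V :=
  if h : ∃ x ∈ e, G.degree x = 1 then h.choose
  else if h2 : ∃ w, ∀ x ∈ e, G.Adj w x then h2.choose
  else e.out.1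

lemma charge_spec (hP : ¬ Contains G (SimpleGraph.pathGraph 4)) {e : Sym2 V}
    (he : e ∈ G.edgeSet) :
    (charge G e ∈ e ∧ G.degree (charge G e) = 1) ∨ (∀ x ∈ e, G.Adj (charge G e) x) := by
  classical
  by_cases h : ∃ x ∈ e, G.degree x = 1
  · left
    have hc : charge G e = h.choose := by rw [charge, dif_pos h]
    rw [hc]
    exact h.choose_spec
  · right
    have h2 : ∃ w, ∀ x ∈ e, G.Adj w x := by
      induction e with
      | h u v =>
        rw [SimpleGraph.mem_edgeSet] at he
        push_neg at h
        have hu2 : 2 ≤ G.degree u := by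
          have h1 : 0 < G.degree u := by
            rw [← SimpleGraph.card_neighborFinset_eq_degree, Finset.card_pos]
            exact ⟨v, (G.mem_neighborFinset u v).mpr he⟩
          have := h u (Sym2.mem_mk_left u v)
          omega
        have hv2 : 2 ≤ G.degree v := by
          have h1 : 0 < G.degree v := by
            rw [← SimpleGraph.card_neighborFinset_eq_degree, Finset.card_pos]
            exact ⟨u, (G.mem_neighborFinset v u).mpr he.symm⟩
          have := h v (Sym2.mem_mk_right u v)
          omega
        obtain ⟨w, hwu, hwv⟩ := tri hP he hu2 hv2
        exact ⟨w, by intro x hx; rcases Sym2.mem_iff.mp hx with rfl | rfl <;> assumption⟩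
    have hc : charge G e = h2.choose := by rw [charge, dif_neg h, dif_pos h2]
    rw [hc]
    exact h2.choose_spec

lemma edge_endpoints {e : Sym2 V} (he : e ∈ G.edgeSet) {w : V} (hw : ∀ x ∈ e, G.Adj w x) :
    ∃ c d, c ≠ d ∧ G.Adj w c ∧ G.Adj w d ∧ e = s(c, d) := by
  induction e with
  | h u v =>
    rw [SimpleGraph.mem_edgeSet] at he
    exact ⟨u, v, he.ne, hw u (Sym2.mem_mk_left u v), hw v (Sym2.mem_mk_right u v), rfl⟩

lemma edge_of_deg_one {w : V} (h1 : G.degree w = 1) {e : Sym2 V} (he : e ∈ G.edgeSet)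
    (hw : w ∈ e) : ∃ x, G.Adj w x ∧ e = s(w, x) := by
  induction e with
  | h u v =>
    rw [SimpleGraph.mem_edgeSet] at he
    rcases Sym2.mem_iff.mp hw with rfl | rfl
    · exact ⟨v, he, rfl⟩
    · exact ⟨u, he.symm, Sym2.eq_swap⟩

lemma charge_injOn (hP : ¬ Contains G (SimpleGraph.pathGraph 4)) :
    Set.InjOn (charge G) G.edgeSet := by
  intro e1 he1 e2 he2 heq
  rcases charge_spec hP he1 with ⟨hm1, hd1⟩ | hB1 <;>
    rcases charge_spec hP he2 with ⟨hm2, hd2⟩ | hB2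
  · rw [← heq] at hm2
    obtain ⟨x1, hx1, hex1⟩ := edge_of_deg_one hd1 he1 hm1
    obtain ⟨x2, hx2, hex2⟩ := edge_of_deg_one hd1 he2 hm2
    rw [hex1, hex2, deg_one_unique hd1 hx1 hx2]
  · exfalso
    rw [heq] at hd1
    obtain ⟨c, d, hcd, hwc, hwd, -⟩ := edge_endpoints he2 hB2
    exact hcd (deg_one_unique hd1 hwc hwd)
  · exfalso
    rw [← heq] at hd2
    obtain ⟨c, d, hcd, hwc, hwd, -⟩ := edge_endpoints he1 hB1
    exact hcd (deg_one_unique hd2 hwc hwd)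
  · obtain ⟨u, v, huv, hwu, hwv, hev⟩ := edge_endpoints he1 hB1
    obtain ⟨c, d, hcd, hwc, hwd, hec⟩ := edge_endpoints he2 hB2
    rw [← heq] at hwc hwd
    have he1' : G.Adj u v := by rw [hev, SimpleGraph.mem_edgeSet] at he1; exact he1
    -- L1 center u : u adj w, u adj v, w ≠ v, u... : w adj c → c = u ∨ c = v
    have hcuv := L1 hP hwu.symm he1' hwv.ne hwc
    have hduv := L1 hP hwu.symm he1' hwv.ne hwd
    rw [hev, hec]
    rcases hcuv with rfl | rfl <;> rcases hduv with rfl | rfl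
    · exact absurd rfl hcd
    · rfl
    · exact Sym2.eq_swap
    · exact absurd rfl hcd

lemma charge_ne_of_deg_le_one (hP : ¬ Contains G (SimpleGraph.pathGraph 4))
    {v : V} (hv : G.degree v ≤ 1) :
    ∃ w, ∀ e ∈ G.edgeSet, charge G e ≠ w := by
  interval_cases h : G.degree v
  · -- isolated vertex
    refine ⟨v, fun e he hc => ?_⟩
    rcases charge_spec hP he with ⟨_, hd1⟩ | hB
    · rw [hc, h] at hd1; omega
    · obtain ⟨c, d, hcd, hwc, hwd, -⟩ := edge_endpoints he hB
      have := deg_ge_two (hc ▸ hwc) (hc ▸ hwd) hcd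
      omega
  · -- degree-one vertex v with neighbor u
    obtain ⟨u, hu⟩ : ∃ u, G.Adj v u := by
      have : 0 < (G.neighborFinset v).card := by
        rw [SimpleGraph.card_neighborFinset_eq_degree, h]; omega
      obtain ⟨u, hu⟩ := Finset.card_pos.mp this
      exact ⟨u, (G.mem_neighborFinset v u).mp hu⟩
    by_cases hdu : G.degree u = 1
    · -- both endpoints degree one
      set c := charge G s(v, u) with hcdef
      have hmem : s(v, u) ∈ G.edgeSet := (SimpleGraph.mem_edgeSet G).mpr hu
      have hcvu : c = v ∨ c = u := by
        rcases charge_spec hP hmem with ⟨hm, _⟩ | hB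
        · exact Sym2.mem_iff.mp hm
        · obtain ⟨x, y, hxy, hcx, hcy, -⟩ := edge_endpoints hmem hB
          exfalso
          have h2 := deg_ge_two hcx hcy hxy
          -- c is adjacent to both v and u
          have hcv : G.Adj c v := hB v (Sym2.mem_mk_left v u)
          have hcu : G.Adj c u := hB u (Sym2.mem_mk_right v u)
          -- v's only neighbor is u, so c = u; but c adj u means c ≠ u
          have : u = c := deg_one_unique h hu hcv.symm
          exact hcu.ne this.symm
      have main : ∀ w, G.degree w = 1 → w ∈ s(v, u) → w ≠ c →
          ∀ e ∈ G.edgeSet, charge G e ≠ w := by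
        intro w hwdeg hwmem hwc e he hc
        rcases charge_spec hP he with ⟨hm, hd1⟩ | hB
        · -- charge e is a degree-1 vertex in e; if it equals w then e = s(v,u), contra
          rw [hc] at hm hd1
          obtain ⟨x, hx, hex⟩ := edge_of_deg_one hd1 he hm
          -- w adj x, and w's unique neighbor: w = v → x = u; w = u → x = v
          have : e = s(v, u) := by
            rw [hex]
            rcases Sym2.mem_iff.mp hwmem with h1 | h1
            · rw [h1] at hx ⊢
              rw [deg_one_unique (h1 ▸ hwdeg) hx (h1 ▸ hu : G.Adj v u)]
            · rw [h1] at hx ⊢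
              rw [deg_one_unique (h1 ▸ hwdeg) hx (h1 ▸ hu.symm : G.Adj u v), Sym2.eq_swap]
          rw [this, ← hcdef] at hc
          exact hwc hc.symm
        · obtain ⟨x, y, hxy, hcx, hcy, -⟩ := edge_endpoints he hB
          have := deg_ge_two (hc ▸ hcx) (hc ▸ hcy) hxy
          omega
      by_cases hcv : c = v
      · exact ⟨u, main u hdu (Sym2.mem_mk_right v u)
          (by rw [hcv]; exact fun hh => hu.ne hh.symm)⟩
      · refine ⟨v, main v h (Sym2.mem_mk_left v u) ?_⟩
        rcases hcvu with h1 | h1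
        · exact absurd h1 hcv
        · rw [h1]; exact hu.ne
    · -- v has degree 1, its neighbor u has degree ≥ 2 : u is never charged
      refine ⟨u, fun e he hc => ?_⟩
      have hdu2 : 2 ≤ G.degree u := by
        have : 0 < G.degree u := by
          rw [← SimpleGraph.card_neighborFinset_eq_degree, Finset.card_pos]
          exact ⟨v, (G.mem_neighborFinset u v).mpr hu.symm⟩
        omega
      rcases charge_spec hP he with ⟨hm, hd1⟩ | hB
      · rw [hc] at hd1; omega
      · obtain ⟨x, y, hxy, hcx, hcy, he'⟩ := edge_endpoints he hB
        rw [hc] at hcx hcy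
        -- u adj x, u adj y, x adj y; then v ∈ {x, y}, but v has degree 1
        have hxy' : G.Adj x y := by rw [he', SimpleGraph.mem_edgeSet] at he; exact he
        -- L1 center x: x adj u, x adj y, u ≠ y, u adj v → v = x ∨ v = y
        have hv' := L1 hP hcx.symm hxy' hcy.ne hu.symm
        rcases hv' with rfl | rfl
        · have := deg_ge_two hu hxy' hcy.ne
          omega
        · have := deg_ge_two hu hxy'.symm hcx.ne
          omega

/-- If every vertex has degree ≥ 2 in a P4-free graph, each closed neighborhood is a triangle. -/
lemma closed_nbhd_structure (hP : ¬ Contains G (SimpleGraph.pathGraph 4))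
    (hd : ∀ v : V, 2 ≤ G.degree v) (v : V) :
    ∃ a b : V, a ≠ b ∧ G.Adj v a ∧ G.Adj v b ∧ G.Adj a b ∧
      G.neighborFinset v = {a, b} ∧ G.neighborFinset a = {v, b} ∧
      G.neighborFinset b = {v, a} := by
  obtain ⟨a, b, hva, hvb, hab⟩ := exists_two_neighbors (hd v)
  have hNa : G.neighborFinset a ⊆ {v, b} := by
    intro x hx
    rcases L1 hP hva hvb hab ((G.mem_neighborFinset a x).mp hx) with rfl | rfl <;> simp
  have hNb : G.neighborFinset b ⊆ {v, a} := by
    intro x hx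
    rcases L1 hP hvb hva hab.symm ((G.mem_neighborFinset b x).mp hx) with rfl | rfl <;> simp
  have hNa' : G.neighborFinset a = {v, b} := by
    apply Finset.eq_of_subset_of_card_le hNa
    rw [SimpleGraph.card_neighborFinset_eq_degree]
    calc ({v, b} : Finset V).card ≤ 2 := Finset.card_insert_le _ _ |>.trans (by simp)
    _ ≤ _ := hd a
  have hab' : G.Adj a b := by
    have : b ∈ G.neighborFinset a := by rw [hNa']; simp
    exact (G.mem_neighborFinset a b).mp this
  have hNb' : G.neighborFinset b = {v, a} := by
    apply Finset.eq_of_subset_of_card_le hNb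
    rw [SimpleGraph.card_neighborFinset_eq_degree]
    calc ({v, a} : Finset V).card ≤ 2 := Finset.card_insert_le _ _ |>.trans (by simp)
    _ ≤ _ := hd b
  have hNv : G.neighborFinset v ⊆ {a, b} := by
    intro x hx
    rcases L1 hP hva.symm hab' hvb.ne ((G.mem_neighborFinset v x).mp hx) with rfl | rfl <;> simp
  have hNv' : G.neighborFinset v = {a, b} := by
    apply Finset.eq_of_subset_of_card_le hNv
    rw [SimpleGraph.card_neighborFinset_eq_degree]
    calc ({a, b} : Finset V).card ≤ 2 := Finset.card_insert_le _ _ |>.trans (by simp)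
    _ ≤ _ := hd v
  exact ⟨a, b, hab, hva, hvb, hab', hNv', hNa', hNb'⟩

lemma three_dvd_of_min_degree_two (hP : ¬ Contains G (SimpleGraph.pathGraph 4))
    (hd : ∀ v : V, 2 ≤ G.degree v) : 3 ∣ Fintype.card V := by
  set T : V → Finset V := fun v => insert v (G.neighborFinset v) with hT
  have hcard : ∀ v, (T v).card = 3 := by
    intro v
    obtain ⟨a, b, hab, hva, hvb, hab', hNv, -, -⟩ := closed_nbhd_structure hP hd v
    rw [hT]
    simp only
    rw [hNv, Finset.card_insert_of_notMem (by simp [hva.ne, hvb.ne]),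
      Finset.card_insert_of_notMem (by simp [hab]), Finset.card_singleton]
  have hTT : ∀ v, ∀ u ∈ T v, T u = T v := by
    intro v u hu
    obtain ⟨a, b, hab, hva, hvb, hab', hNv, hNa, hNb⟩ := closed_nbhd_structure hP hd v
    rw [hT] at hu ⊢
    simp only [Finset.mem_insert, SimpleGraph.mem_neighborFinset] at hu
    have hv3 : insert v (G.neighborFinset v) = {v, a, b} := by rw [hNv]
    rcases hu with rfl | hu
    · rfl
    · have : u = a ∨ u = b := by
        have : u ∈ G.neighborFinset v := (G.mem_neighborFinset v u).mpr hu
        rw [hNv] at this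
        simpa using this
      rcases this with rfl | rfl
      · show insert u (G.neighborFinset u) = insert v (G.neighborFinset v)
        rw [hNa, hNv]
        ext x; simp; tauto
      · show insert u (G.neighborFinset u) = insert v (G.neighborFinset v)
        rw [hNb, hNv]
        ext x; simp; tauto
  -- partition
  classical
  set S : Finset (Finset V) := Finset.univ.image T with hS
  have hdisj : ∀ s ∈ S, ∀ t ∈ S, s ≠ t → Disjoint s t := by
    intro s hs t ht hst
    rw [Finset.disjoint_left]
    intro x hxs hxt
    obtain ⟨u, -, rfl⟩ := Finset.mem_image.mp hs
    obtain ⟨w, -, rfl⟩ := Finset.mem_image.mp ht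
    exact hst ((hTT u x hxs).symm.trans (hTT w x hxt))
  have huniv : S.biUnion (fun s => s) = Finset.univ := by
    apply Finset.eq_univ_of_forall
    intro x
    rw [Finset.mem_biUnion]
    exact ⟨T x, Finset.mem_image_of_mem T (Finset.mem_univ x), by simp [hT]⟩
  have hsum : (S.biUnion (fun s => s)).card = ∑ s ∈ S, s.card :=
    Finset.card_biUnion hdisj
  have : Fintype.card V = 3 * S.card := by
    rw [← Finset.card_univ, ← huniv, hsum,
      Finset.sum_congr rfl (fun s hs => ?_), Finset.sum_const, smul_eq_mul, mul_comm]
    obtain ⟨u, -, rfl⟩ := Finset.mem_image.mp hs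
    exact hcard u
  exact ⟨S.card, this⟩

lemma edges_le_card (hP : ¬ Contains G (SimpleGraph.pathGraph 4)) :
    G.edgeFinset.card ≤ Fintype.card V := by
  rw [← Finset.card_univ]
  apply Finset.card_le_card_of_injOn (charge G) (fun e _ => Finset.mem_univ _)
  have := charge_injOn hP
  rwa [← G.coe_edgeFinset] at this

lemma edges_le_card_sub_one (hP : ¬ Contains G (SimpleGraph.pathGraph 4))
    (hv : ∃ v : V, G.degree v ≤ 1) :
    G.edgeFinset.card ≤ Fintype.card V - 1 := by
  obtain ⟨v, hv⟩ := hv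
  obtain ⟨w, hw⟩ := charge_ne_of_deg_le_one hP hv
  have h1 : G.edgeFinset.card ≤ (Finset.univ.erase w).card := by
    apply Finset.card_le_card_of_injOn (charge G)
    · intro e he
      rw [Finset.mem_coe, Finset.mem_erase]
      exact ⟨hw e (SimpleGraph.mem_edgeFinset.mp he), Finset.mem_univ _⟩
    · have := charge_injOn hP
      rwa [← G.coe_edgeFinset] at this
  rwa [Finset.card_erase_of_mem (Finset.mem_univ w), Finset.card_univ] at h1

lemma edges_le_card_sub_one' (hP : ¬ Contains G (SimpleGraph.pathGraph 4))
    (h3 : ¬ 3 ∣ Fintype.card V) :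
    G.edgeFinset.card ≤ Fintype.card V - 1 := by
  by_cases hv : ∃ v : V, G.degree v ≤ 1
  · exact edges_le_card_sub_one hP hv
  · push_neg at hv
    exact absurd (three_dvd_of_min_degree_two hP (fun v => hv v)) h3

end Upper

section Star
variable {n : ℕ}

def starG (n : ℕ) (hn : 0 < n) : SimpleGraph (Fin n) :=
  SimpleGraph.fromRel (fun u _ => u = ⟨0, hn⟩)

lemma starG_adj (hn : 0 < n) {u v : Fin n} :
    (starG n hn).Adj u v ↔ u ≠ v ∧ (u = ⟨0, hn⟩ ∨ v = ⟨0, hn⟩) := by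
  simp [starG, SimpleGraph.fromRel_adj]

lemma starG_free (hn : 0 < n) : ¬ Contains (starG n hn) (SimpleGraph.pathGraph 4) := by
  rintro ⟨f, hinj⟩
  have hadj : ∀ i j : Fin 4, i.val + 1 = j.val → (starG n hn).Adj (f i) (f j) :=
    fun i j hij => f.map_rel (SimpleGraph.pathGraph_adj.mpr (Or.inl hij))
  have h01 := (starG_adj hn).mp (hadj 0 1 rfl)
  have h12 := (starG_adj hn).mp (hadj 1 2 rfl)
  have h23 := (starG_adj hn).mp (hadj 2 3 rfl)
  rcases h12.2 with h | h
  · rcases h23.2 with h' | h'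
    · exact absurd (hinj (h.trans h'.symm)) (by decide)
    · exact absurd (hinj (h.trans h'.symm)) (by decide)
  · rcases h01.2 with h' | h'
    · exact absurd (hinj (h'.trans h.symm)) (by decide)
    · exact absurd (hinj (h'.trans h.symm)) (by decide)

lemma starG_card (hn : 0 < n) : (starG n hn).edgeSet.ncard = n - 1 := by
  classical
  set z : Fin n := ⟨0, hn⟩ with hz
  have hset : (starG n hn).edgeSet = (fun v => s(z, v)) '' {v | v ≠ z} := by
    ext e
    induction e with
    | h u v =>
      simp only [SimpleGraph.mem_edgeSet, starG_adj hn, Set.mem_image, Set.mem_setOf_eq]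
      constructor
      · rintro ⟨huv, rfl | rfl⟩
        · exact ⟨v, fun h => huv h.symm, rfl⟩
        · exact ⟨u, fun h => huv h, Sym2.eq_swap⟩
      · rintro ⟨w, hw, hwe⟩
        rw [Sym2.eq_iff] at hwe
        rcases hwe with ⟨rfl, rfl⟩ | ⟨rfl, rfl⟩
        · exact ⟨fun h => hw h.symm, Or.inl rfl⟩
        · exact ⟨hw, Or.inr rfl⟩
  rw [hset]
  rw [Set.ncard_image_of_injOn]
  · have : {v : Fin n | v ≠ z} = (Finset.univ.erase z : Finset (Fin n)) := by
      ext v; simp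
    rw [this, Set.ncard_coe_finset, Finset.card_erase_of_mem (Finset.mem_univ z),
      Finset.card_univ, Fintype.card_fin]
  · intro a ha b hb hab
    rwa [Sym2.congr_right] at hab
end Star

section Tri
variable {n : ℕ}

def triG (n : ℕ) : SimpleGraph (Fin n) :=
  SimpleGraph.fromRel (fun u v => u.val / 3 = v.val / 3)

lemma triG_adj {u v : Fin n} :
    (triG n).Adj u v ↔ u ≠ v ∧ u.val / 3 = v.val / 3 := by
  constructor
  · rintro ⟨huv, h | h⟩
    · exact ⟨huv, h⟩
    · exact ⟨huv, h.symm⟩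
  · rintro ⟨huv, h⟩
    exact ⟨huv, Or.inl h⟩

lemma triG_free : ¬ Contains (triG n) (SimpleGraph.pathGraph 4) := by
  rintro ⟨f, hinj⟩
  have hadj : ∀ i j : Fin 4, i.val + 1 = j.val → (triG n).Adj (f i) (f j) :=
    fun i j hij => f.map_rel (SimpleGraph.pathGraph_adj.mpr (Or.inl hij))
  have h01 := triG_adj.mp (hadj 0 1 rfl)
  have h12 := triG_adj.mp (hadj 1 2 rfl)
  have h23 := triG_adj.mp (hadj 2 3 rfl)
  have d02 : f 0 ≠ f 2 := fun h => absurd (hinj h) (by decide)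
  have d03 : f 0 ≠ f 3 := fun h => absurd (hinj h) (by decide)
  have d13 : f 1 ≠ f 3 := fun h => absurd (hinj h) (by decide)
  have v01 : (f 0).val ≠ (f 1).val := fun h => h01.1 (Fin.ext h)
  have v12 : (f 1).val ≠ (f 2).val := fun h => h12.1 (Fin.ext h)
  have v23 : (f 2).val ≠ (f 3).val := fun h => h23.1 (Fin.ext h)
  have v02 : (f 0).val ≠ (f 2).val := fun h => d02 (Fin.ext h)
  have v03 : (f 0).val ≠ (f 3).val := fun h => d03 (Fin.ext h)
  have v13 : (f 1).val ≠ (f 3).val := fun h => d13 (Fin.ext h)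
  have q01 := h01.2
  have q12 := h12.2
  have q23 := h23.2
  omega

instance triG_decAdj (n : ℕ) : DecidableRel (triG n).Adj := fun _ _ => instDecidableAnd

lemma triG_degree (h3 : n % 3 = 0) (v : Fin n) : (triG n).degree v = 2 := by
  have hv := v.isLt
  have h1 : 3 * (v.val / 3) + (v.val % 3 + 1) % 3 < n := by omega
  have h2 : 3 * (v.val / 3) + (v.val % 3 + 2) % 3 < n := by omega
  have hset : (triG n).neighborFinset v = {⟨_, h1⟩, ⟨_, h2⟩} := by
    ext u
    have hu := u.isLt
    simp only [SimpleGraph.mem_neighborFinset, triG_adj, Finset.mem_insert,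
      Finset.mem_singleton, Fin.ext_iff, ne_eq]
    omega
  rw [← SimpleGraph.card_neighborFinset_eq_degree, hset]
  rw [Finset.card_insert_of_notMem (by simp [Fin.ext_iff]; omega), Finset.card_singleton]

lemma triG_card (h3 : n % 3 = 0) : (triG n).edgeSet.ncard = n := by
  rw [← SimpleGraph.coe_edgeFinset, Set.ncard_coe_finset]
  have hs := SimpleGraph.sum_degrees_eq_twice_card_edges (triG n)
  rw [Finset.sum_congr rfl (fun v _ => triG_degree h3 v), Finset.sum_const,
    Finset.card_univ, Fintype.card_fin, smul_eq_mul] at hs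
  omega
end Tri


theorem extremal_number_P4 (n : ℕ) (hn : 3 ≤ n) :
    IsGreatest {m | ∃ G : SimpleGraph (Fin n),
        ¬ Contains G (SimpleGraph.pathGraph 4) ∧ G.edgeSet.ncard = m}
      (if n % 3 = 0 then n else n - 1) := by
  constructor
  · by_cases h3 : n % 3 = 0
    · rw [if_pos h3]
      exact ⟨triG n, triG_free, triG_card h3⟩
    · rw [if_neg h3]
      exact ⟨starG n (by omega), starG_free _, starG_card _⟩
  · rintro m ⟨G, hfree, hcard⟩
    letI : DecidableRel G.Adj := Classical.decRel _
    have hm : m = G.edgeFinset.card := by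
      rw [← hcard, ← SimpleGraph.coe_edgeFinset, Set.ncard_coe_finset]
    by_cases h3 : n % 3 = 0
    · rw [if_pos h3]
      have := edges_le_card hfree
      rw [Fintype.card_fin] at this
      omega
    · rw [if_neg h3]
      have h3' : ¬ 3 ∣ Fintype.card (Fin n) := by
        rw [Fintype.card_fin]
        omega
      have := edges_le_card_sub_one' hfree h3'
      rw [Fintype.card_fin] at this
      omega
end

section
/- The extremal number for P_5 satisfies: ex(n, P_5) = 3n/2 if n ≡ 0 (mod 4), ex(n, P_5) = 3n/2 - 2 if n ≡ 2 (mod 4), and ex(n, P_5) = (3n-3)/2 if n ≡ 1 or 3 (mod 4), for all n ≥ 3. -/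
open SimpleGraph

set_option linter.unreachableTactic false
set_option linter.unusedTactic false

def gP (n : ℕ) : ℕ :=
  if n % 4 = 0 then 3 * n / 2
  else if n % 4 = 2 then 3 * n / 2 - 2
  else (3 * n - 3) / 2

lemma gP_A1 {n : ℕ} (h : 2 ≤ n) : gP (n - 2) + 1 ≤ gP n := by
  unfold gP; split_ifs <;> omega

lemma gP_A2 {n : ℕ} (h : 3 ≤ n) : gP (n - 3) + 3 ≤ gP n := by
  unfold gP; split_ifs <;> omega

lemma gP_A3 {n : ℕ} (h : 4 ≤ n) : gP (n - 4) + 6 ≤ gP n := by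
  unfold gP; split_ifs <;> omega

lemma gP_A4 {n c : ℕ} (h4 : 4 ≤ c) (hc : c ≤ n) : gP (n - c) + c ≤ gP n := by
  unfold gP; split_ifs <;> omega

variable {n : ℕ}

def HasP5 (G : SimpleGraph (Fin n)) : Prop :=
  ∃ a b c d e : Fin n, G.Adj a b ∧ G.Adj b c ∧ G.Adj c d ∧ G.Adj d e ∧
    a ≠ c ∧ a ≠ d ∧ a ≠ e ∧ b ≠ d ∧ b ≠ e ∧ c ≠ e

def HasP4 (G : SimpleGraph (Fin n)) : Prop :=
  ∃ a b c d : Fin n, G.Adj a b ∧ G.Adj b c ∧ G.Adj c d ∧ a ≠ c ∧ a ≠ d ∧ b ≠ d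

def HasP3 (G : SimpleGraph (Fin n)) : Prop :=
  ∃ a b c : Fin n, G.Adj a b ∧ G.Adj b c ∧ a ≠ c

/-- Edges of `G` with at least one endpoint in `S`. -/
def touch (G : SimpleGraph (Fin n)) (S : Set (Fin n)) : Set (Sym2 (Fin n)) :=
  {e | e ∈ G.edgeSet ∧ ∃ v ∈ S, v ∈ e}

/-- `G` with all edges meeting `S` removed. -/
def avoid (G : SimpleGraph (Fin n)) (S : Set (Fin n)) : SimpleGraph (Fin n) where
  Adj u v := G.Adj u v ∧ u ∉ S ∧ v ∉ S
  symm := by constructor; rintro u v ⟨h, h1, h2⟩; exact ⟨h.symm, h2, h1⟩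
  loopless := by constructor; rintro v ⟨h, -, -⟩; exact G.irrefl h

lemma edgeSet_subset_avoid_touch (G : SimpleGraph (Fin n)) (S : Set (Fin n)) :
    G.edgeSet ⊆ (avoid G S).edgeSet ∪ touch G S := by
  intro e
  refine Sym2.ind (fun u v => ?_) e
  intro he
  rw [SimpleGraph.mem_edgeSet] at he
  by_cases hu : u ∈ S
  · exact Or.inr ⟨G.mem_edgeSet.mpr he, u, hu, Sym2.mem_mk_left u v⟩
  by_cases hv : v ∈ S
  · exact Or.inr ⟨G.mem_edgeSet.mpr he, v, hv, Sym2.mem_mk_right u v⟩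
  · exact Or.inl ((avoid G S).mem_edgeSet.mpr ⟨he, hu, hv⟩)

lemma card_decomp (G : SimpleGraph (Fin n)) (S : Set (Fin n)) :
    G.edgeSet.ncard ≤ (touch G S).ncard + (avoid G S).edgeSet.ncard := by
  calc G.edgeSet.ncard ≤ ((avoid G S).edgeSet ∪ touch G S).ncard :=
        Set.ncard_le_ncard (edgeSet_subset_avoid_touch G S) (Set.toFinite _)
    _ ≤ (avoid G S).edgeSet.ncard + (touch G S).ncard := Set.ncard_union_le _ _
    _ = _ := Nat.add_comm _ _

lemma avoid_noP5 {G : SimpleGraph (Fin n)} {S : Set (Fin n)} (hG : ¬ HasP5 G) :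
    ¬ HasP5 (avoid G S) := by
  rintro ⟨a, b, c, d, e, h1, h2, h3, h4, h5⟩
  exact hG ⟨a, b, c, d, e, h1.1, h2.1, h3.1, h4.1, h5⟩

/-- If every vertex of `T` has at most one neighbour, and `T` is independent,
then the number of edges meeting `T` is at most `|T|`. -/
lemma touch_ncard_le {G : SimpleGraph (Fin n)} {T : Set (Fin n)}
    (h2 : ∀ y ∈ T, ∀ z z', G.Adj y z → G.Adj y z' → z = z') :
    (touch G T).ncard ≤ T.ncard := by
  classical
  apply Set.ncard_le_ncard_of_injOn
    (fun e => if h : ∃ y ∈ T, y ∈ e then h.choose else (Quot.out e).1)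
  · rintro e ⟨-, hy⟩
    rw [dif_pos hy]
    exact hy.choose_spec.1
  · rintro e1 ⟨he1, hy1⟩ e2 ⟨he2, hy2⟩ heq
    dsimp only at heq
    rw [dif_pos hy1, dif_pos hy2] at heq
    obtain ⟨hT1, hm1⟩ := hy1.choose_spec
    obtain ⟨hT2, hm2⟩ := hy2.choose_spec
    rw [← heq] at hm2 hT2
    obtain ⟨z1, h1⟩ := Sym2.mem_iff_exists.mp hm1
    obtain ⟨z2, h2'⟩ := Sym2.mem_iff_exists.mp hm2
    have had1 : G.Adj hy1.choose z1 := G.mem_edgeSet.mp (h1 ▸ he1)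
    have had2 : G.Adj hy1.choose z2 := G.mem_edgeSet.mp (h2' ▸ he2)
    rw [h1, h2', h2 _ hT1 z1 z2 had1 had2]

/-- The common closing argument of every case of the induction. -/
lemma key_step {m : ℕ} {G : SimpleGraph (Fin n)} {A S : Set (Fin n)} {B : ℕ}
    (IH : ∀ (G : SimpleGraph (Fin n)) (A : Set (Fin n)), ¬ HasP5 G →
      (∀ u v, G.Adj u v → u ∈ A) → A.ncard ≤ m → G.edgeSet.ncard ≤ gP A.ncard)
    (hG : ¬ HasP5 G) (hA : ∀ u v, G.Adj u v → u ∈ A) (hAm : A.ncard ≤ m + 1)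
    (hSA : S ⊆ A) (hSne : S.Nonempty)
    (htouch : (touch G S).ncard ≤ B)
    (harith : gP (A.ncard - S.ncard) + B ≤ gP A.ncard) :
    G.edgeSet.ncard ≤ gP A.ncard := by
  obtain ⟨s, hs⟩ := hSne
  have hss : A \ S ⊂ A := by
    refine ⟨Set.diff_subset, fun hsub => ?_⟩
    exact (hsub (hSA hs)).2 hs
  have hlt : (A \ S).ncard < A.ncard := Set.ncard_lt_ncard hss (Set.toFinite _)
  have hAS : (A \ S).ncard = A.ncard - S.ncard := Set.ncard_diff hSA (Set.toFinite _)
  have havoid : (avoid G S).edgeSet.ncard ≤ gP ((A \ S).ncard) := by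
    apply IH (avoid G S) (A \ S) (avoid_noP5 hG)
    · rintro u v ⟨h, hu, -⟩
      exact ⟨hA u v h, hu⟩
    · omega
  have := card_decomp G S
  rw [hAS] at havoid
  omega

section Cases

variable {G : SimpleGraph (Fin n)} {A : Set (Fin n)}

/-- Case: longest path has 4 vertices and some extra vertex is attached to `b`. -/
lemma stepP4 {m : ℕ}
    (IH : ∀ (G : SimpleGraph (Fin n)) (A : Set (Fin n)), ¬ HasP5 G →
      (∀ u v, G.Adj u v → u ∈ A) → A.ncard ≤ m → G.edgeSet.ncard ≤ gP A.ncard)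
    (hG : ¬ HasP5 G) (hA : ∀ u v, G.Adj u v → u ∈ A) (hAm : A.ncard ≤ m + 1)
    {a b c d x : Fin n}
    (hab : G.Adj a b) (hbc : G.Adj b c) (hcd : G.Adj c d)
    (hac : a ≠ c) (had : a ≠ d) (hbd : b ≠ d)
    (hxb : G.Adj x b) (hxa : x ≠ a) (hxc : x ≠ c) (hxd : x ≠ d) :
    G.edgeSet.ncard ≤ gP A.ncard := by
  have hnab : a ≠ b := hab.ne
  have hnbc : b ≠ c := hbc.ne
  have hncd : c ≠ d := hcd.ne
  have hnxb : x ≠ b := hxb.ne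
  set T : Set (Fin n) := {y | (G.Adj y b ∨ G.Adj y c) ∧ y ≠ a ∧ y ≠ b ∧ y ≠ c ∧ y ≠ d}
    with hT
  have hxT : x ∈ T := ⟨Or.inl hxb, hxa, hnxb, hxc, hxd⟩
  -- F1 : the only neighbour of `a` is `b`
  have F1 : ∀ w, G.Adj a w → w = b := by
    intro w hw
    by_contra hwb
    by_cases hwc : w = c
    · exact hG ⟨x, b, a, c, d, hxb, hab.symm, hwc ▸ hw, hcd, hxa, hxc, hxd, hnbc, hbd, had⟩
    by_cases hwd : w = d
    · exact hG ⟨x, b, a, d, c, hxb, hab.symm, hwd ▸ hw, hcd.symm, hxa, hxd, hxc, hbd, hnbc, hac⟩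
    · exact hG ⟨w, a, b, c, d, hw.symm, hab, hbc, hcd, hwb, hwc, hwd, hac, had, hbd⟩
  -- F2 : neighbours of `d` are only `b, c`
  have F2 : ∀ w, G.Adj d w → w = b ∨ w = c := by
    intro w hw
    by_contra hcon
    push_neg at hcon
    obtain ⟨hwb, hwc⟩ := hcon
    by_cases hwa : w = a
    · exact hbd (F1 d (hwa ▸ hw).symm).symm
    · exact hG ⟨a, b, c, d, w, hab, hbc, hcd, hw, hac, had,
        fun h => hwa h.symm, hbd, fun h => hwb h.symm, fun h => hwc h.symm⟩
  -- F5 : neighbours of vertices of `T` are only `b, c`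
  have F5 : ∀ y ∈ T, ∀ z, G.Adj y z → z = b ∨ z = c := by
    rintro y ⟨hy, hya, hyb, hyc, hyd⟩ z hz
    by_contra hcon
    push_neg at hcon
    obtain ⟨hzb, hzc⟩ := hcon
    by_cases hza : z = a
    · subst hza
      exact hyb (F1 y hz.symm)
    by_cases hzd : z = d
    · subst hzd
      rcases F2 y hz.symm with h | h
      · exact hyb h
      · exact hyc h
    rcases hy with hyB | hyC
    · exact hG ⟨z, y, b, c, d, hz.symm, hyB, hbc, hcd, hzb, hzc, hzd, hyc, hyd, hbd⟩
    · exact hG ⟨z, y, c, b, a, hz.symm, hyC, hbc.symm, hab.symm, hzc, hzb, hza, hyb, hya,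
        fun h => hac h.symm⟩
  -- F6 : no vertex of `T` is adjacent to both `b` and `c`
  have F6 : ∀ y ∈ T, ¬ (G.Adj y b ∧ G.Adj y c) := by
    rintro y ⟨-, hya, hyb, hyc, hyd⟩ ⟨h1, h2⟩
    exact hG ⟨a, b, y, c, d, hab, h1.symm, h2, hcd, fun h => hya h.symm, hac, had, hnbc, hbd, hyd⟩
  set S : Set (Fin n) := {a, b, c, d} ∪ T with hS
  have hSA : S ⊆ A := by
    rintro v (hv | hv)
    · rcases hv with rfl | rfl | rfl | rfl
      · exact hA v b hab
      · exact hA v c hbc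
      · exact hA v d hcd
      · exact hA v c hcd.symm
    · rcases hv.1 with h | h
      · exact hA v b h
      · exact hA v c h
  -- touch S is contained in 4 explicit edges together with edges meeting T
  have hsub : touch G S ⊆ ({s(a,b), s(b,c), s(c,d), s(b,d)} : Set (Sym2 (Fin n))) ∪ touch G T := by
    rintro e ⟨he, v, hvS, hve⟩
    obtain ⟨w, rfl⟩ := Sym2.mem_iff_exists.mp hve
    have hadj : G.Adj v w := G.mem_edgeSet.mp he
    rcases hvS with (hv | hv | hv | hv) | hvT
    · -- v = a
      have hw' := F1 w (hv ▸ hadj)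
      exact Or.inl (by rw [hv, hw']; simp)
    · -- v = b
      have hadj' : G.Adj b w := hv ▸ hadj
      by_cases hwa : w = a
      · exact Or.inl (by rw [hv, hwa, Sym2.eq_swap]; simp)
      by_cases hwc : w = c
      · exact Or.inl (by rw [hv, hwc]; simp)
      by_cases hwd : w = d
      · exact Or.inl (by rw [hv, hwd]; simp)
      · have hwT : w ∈ T := ⟨Or.inl hadj'.symm, hwa, hadj'.ne', hwc, hwd⟩
        exact Or.inr ⟨he, w, hwT, Sym2.mem_mk_right v w⟩
    · -- v = c
      have hadj' : G.Adj c w := hv ▸ hadj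
      by_cases hwa : w = a
      · exact absurd (F1 c (hwa ▸ hadj').symm) (Ne.symm hnbc)
      by_cases hwb : w = b
      · exact Or.inl (by rw [hv, hwb, Sym2.eq_swap]; simp)
      by_cases hwd : w = d
      · exact Or.inl (by rw [hv, hwd]; simp)
      · have hwT : w ∈ T := ⟨Or.inr hadj'.symm, hwa, hwb, hadj'.ne', hwd⟩
        exact Or.inr ⟨he, w, hwT, Sym2.mem_mk_right v w⟩
    · -- v = d
      rcases F2 w (hv ▸ hadj) with hwb | hwc
      · exact Or.inl (by rw [hv, hwb, Sym2.eq_swap]; simp)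
      · exact Or.inl (by rw [hv, hwc, Sym2.eq_swap]; simp)
    · exact Or.inr ⟨he, v, hvT, Sym2.mem_mk_left v w⟩
  have htouchT : (touch G T).ncard ≤ T.ncard := by
    apply touch_ncard_le
    intro y hy z z' hz hz'
    rcases F5 y hy z hz with rfl | rfl <;> rcases F5 y hy z' hz' with rfl | rfl
    · rfl
    · exact absurd ⟨hz, hz'⟩ (F6 y hy)
    · exact absurd ⟨hz', hz⟩ (F6 y hy)
    · rfl
  have hE0 : ({s(a,b), s(b,c), s(c,d), s(b,d)} : Set (Sym2 (Fin n))).ncard ≤ 4 := by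
    apply le_trans (Set.ncard_insert_le _ _)
    have := Set.ncard_insert_le s(b,c) ({s(c,d), s(b,d)} : Set (Sym2 (Fin n)))
    have := Set.ncard_insert_le s(c,d) ({s(b,d)} : Set (Sym2 (Fin n)))
    have := Set.ncard_singleton (s(b,d) : Sym2 (Fin n))
    omega
  have htouch : (touch G S).ncard ≤ 4 + T.ncard := by
    calc (touch G S).ncard
        ≤ (({s(a,b), s(b,c), s(c,d), s(b,d)} : Set (Sym2 (Fin n))) ∪ touch G T).ncard :=
          Set.ncard_le_ncard hsub (Set.toFinite _)
      _ ≤ ({s(a,b), s(b,c), s(c,d), s(b,d)} : Set (Sym2 (Fin n))).ncard + (touch G T).ncard :=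
          Set.ncard_union_le _ _
      _ ≤ 4 + T.ncard := by omega
  -- |S| = 4 + |T|
  have haT : a ∉ T := fun h => h.2.1 rfl
  have hbT : b ∉ T := fun h => h.2.2.1 rfl
  have hcT : c ∉ T := fun h => h.2.2.2.1 rfl
  have hdT : d ∉ T := fun h => h.2.2.2.2 rfl
  have hScard : S.ncard = 4 + T.ncard := by
    rw [hS]
    rw [show ({a, b, c, d} : Set (Fin n)) ∪ T = insert a (insert b (insert c (insert d T))) by
      simp [Set.insert_union]]
    rw [Set.ncard_insert_of_notMem (by simp [haT, hnab, hac, had]) (Set.toFinite _),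
      Set.ncard_insert_of_notMem (by simp [hbT, hnbc, hbd]) (Set.toFinite _),
      Set.ncard_insert_of_notMem (by simp [hcT, hncd]) (Set.toFinite _),
      Set.ncard_insert_of_notMem hdT (Set.toFinite _)]
    omega
  have hTpos : 1 ≤ T.ncard := by
    rw [Nat.one_le_iff_ne_zero]
    intro h0
    rw [Set.ncard_eq_zero (Set.toFinite _)] at h0
    exact absurd (h0 ▸ hxT) (Set.notMem_empty x)
  have hcardA : S.ncard ≤ A.ncard := Set.ncard_le_ncard hSA (Set.toFinite _)
  apply key_step IH hG hA hAm hSA ⟨a, Or.inl (by simp)⟩ htouch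
  have harith := gP_A4 (show 4 ≤ S.ncard by omega) hcardA
  omega



/-- Case: longest path has 4 vertices, no pendant vertices at `b` or `c`. -/
lemma stepP4n {m : ℕ}
    (IH : ∀ (G : SimpleGraph (Fin n)) (A : Set (Fin n)), ¬ HasP5 G →
      (∀ u v, G.Adj u v → u ∈ A) → A.ncard ≤ m → G.edgeSet.ncard ≤ gP A.ncard)
    (hG : ¬ HasP5 G) (hA : ∀ u v, G.Adj u v → u ∈ A) (hAm : A.ncard ≤ m + 1)
    {a b c d : Fin n}
    (hab : G.Adj a b) (hbc : G.Adj b c) (hcd : G.Adj c d)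
    (hac : a ≠ c) (had : a ≠ d) (hbd : b ≠ d)
    (hx2 : ¬ ∃ x, G.Adj x b ∧ x ≠ a ∧ x ≠ c ∧ x ≠ d)
    (hx3 : ¬ ∃ x, G.Adj x c ∧ x ≠ a ∧ x ≠ b ∧ x ≠ d) :
    G.edgeSet.ncard ≤ gP A.ncard := by
  have hnab : a ≠ b := hab.ne
  have hnbc : b ≠ c := hbc.ne
  have hncd : c ≠ d := hcd.ne
  have F1 : ∀ w, G.Adj a w → w = b ∨ w = c ∨ w = d := by
    intro w hw
    by_contra hcon
    push_neg at hcon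
    obtain ⟨hwb, hwc, hwd⟩ := hcon
    exact hG ⟨w, a, b, c, d, hw.symm, hab, hbc, hcd, hwb, hwc, hwd, hac, had, hbd⟩
  have F4 : ∀ w, G.Adj d w → w = a ∨ w = b ∨ w = c := by
    intro w hw
    by_contra hcon
    push_neg at hcon
    obtain ⟨hwa, hwb, hwc⟩ := hcon
    exact hG ⟨a, b, c, d, w, hab, hbc, hcd, hw, hac, had, Ne.symm hwa, hbd, Ne.symm hwb,
      Ne.symm hwc⟩
  have F2 : ∀ w, G.Adj b w → w = a ∨ w = c ∨ w = d := by
    intro w hw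
    by_contra hcon
    push_neg at hcon
    obtain ⟨hwa, hwc, hwd⟩ := hcon
    exact hx2 ⟨w, hw.symm, hwa, hwc, hwd⟩
  have F3 : ∀ w, G.Adj c w → w = a ∨ w = b ∨ w = d := by
    intro w hw
    by_contra hcon
    push_neg at hcon
    obtain ⟨hwa, hwb, hwd⟩ := hcon
    exact hx3 ⟨w, hw.symm, hwa, hwb, hwd⟩
  set S : Set (Fin n) := {a, b, c, d} with hS
  have hSA : S ⊆ A := by
    rintro v (rfl | rfl | rfl | rfl)
    · exact hA v b hab
    · exact hA v c hbc
    · exact hA v d hcd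
    · exact hA v c hcd.symm
  have hsub : touch G S ⊆
      ({s(a,b), s(a,c), s(a,d), s(b,c), s(b,d), s(c,d)} : Set (Sym2 (Fin n))) := by
    rintro e ⟨he, v, hvS, hve⟩
    obtain ⟨w, rfl⟩ := Sym2.mem_iff_exists.mp hve
    have hadj : G.Adj v w := G.mem_edgeSet.mp he
    rcases hvS with hv | hv | hv | hv
    · rcases F1 w (hv ▸ hadj) with hw | hw | hw <;>
        · rw [hv, hw]; simp
    · rcases F2 w (hv ▸ hadj) with hw | hw | hw <;>
        · rw [hv, hw]; first | simp | (rw [Sym2.eq_swap]; simp)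
    · rcases F3 w (hv ▸ hadj) with hw | hw | hw <;>
        · rw [hv, hw]; first | simp | (rw [Sym2.eq_swap]; simp)
    · rcases F4 w (hv ▸ hadj) with hw | hw | hw <;>
        · rw [hv, hw]; rw [Sym2.eq_swap]; simp
  have htouch : (touch G S).ncard ≤ 6 := by
    refine le_trans (Set.ncard_le_ncard hsub (Set.toFinite _)) ?_
    have h1 := Set.ncard_insert_le (s(a,b) : Sym2 (Fin n)) {s(a,c), s(a,d), s(b,c), s(b,d), s(c,d)}
    have h2 := Set.ncard_insert_le (s(a,c) : Sym2 (Fin n)) {s(a,d), s(b,c), s(b,d), s(c,d)}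
    have h3 := Set.ncard_insert_le (s(a,d) : Sym2 (Fin n)) {s(b,c), s(b,d), s(c,d)}
    have h4 := Set.ncard_insert_le (s(b,c) : Sym2 (Fin n)) {s(b,d), s(c,d)}
    have h5 := Set.ncard_insert_le (s(b,d) : Sym2 (Fin n)) {s(c,d)}
    have h6 := Set.ncard_singleton (s(c,d) : Sym2 (Fin n))
    omega
  have hScard : S.ncard = 4 := by
    rw [hS, Set.ncard_insert_of_notMem (by simp [hnab, hac, had]) (Set.toFinite _),
      Set.ncard_insert_of_notMem (by simp [hnbc, hbd]) (Set.toFinite _),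
      Set.ncard_insert_of_notMem (by simp [hncd]) (Set.toFinite _),
      Set.ncard_singleton]
  have hcardA : S.ncard ≤ A.ncard := Set.ncard_le_ncard hSA (Set.toFinite _)
  apply key_step IH hG hA hAm hSA ⟨a, by simp [hS]⟩ htouch
  rw [hScard]
  have harith := gP_A3 (show 4 ≤ A.ncard by omega)
  omega

/-- Case: no path on 4 vertices, triangle-or-path `a b c`, with a pendant at `b`. -/
lemma stepP3 {m : ℕ}
    (IH : ∀ (G : SimpleGraph (Fin n)) (A : Set (Fin n)), ¬ HasP5 G →
      (∀ u v, G.Adj u v → u ∈ A) → A.ncard ≤ m → G.edgeSet.ncard ≤ gP A.ncard)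
    (hG : ¬ HasP5 G) (hG4 : ¬ HasP4 G)
    (hA : ∀ u v, G.Adj u v → u ∈ A) (hAm : A.ncard ≤ m + 1)
    {a b c x : Fin n}
    (hab : G.Adj a b) (hbc : G.Adj b c) (hac : a ≠ c)
    (hxb : G.Adj x b) (hxa : x ≠ a) (hxc : x ≠ c) :
    G.edgeSet.ncard ≤ gP A.ncard := by
  have hnab : a ≠ b := hab.ne
  have hnbc : b ≠ c := hbc.ne
  have hnxb : x ≠ b := hxb.ne
  set T : Set (Fin n) := {y | G.Adj y b ∧ y ≠ a ∧ y ≠ c} with hT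
  have hxT : x ∈ T := ⟨hxb, hxa, hxc⟩
  have F1 : ∀ w, G.Adj a w → w = b := by
    intro w hw
    by_contra hwb
    by_cases hwc : w = c
    · exact hG4 ⟨x, b, a, c, hxb, hab.symm, hwc ▸ hw, hxa, hxc, hnbc⟩
    · exact hG4 ⟨w, a, b, c, hw.symm, hab, hbc, hwb, hwc, hac⟩
  have F2 : ∀ w, G.Adj c w → w = b := by
    intro w hw
    by_contra hwb
    by_cases hwa : w = a
    · exact (Ne.symm hnbc) (F1 c (hwa ▸ hw).symm)
    · exact hG4 ⟨w, c, b, a, hw.symm, hbc.symm, hab.symm, hwb, hwa, Ne.symm hac⟩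
  have F3 : ∀ y ∈ T, ∀ z, G.Adj y z → z = b := by
    rintro y ⟨hyB, hya, hyc⟩ z hz
    have hyb : y ≠ b := hyB.ne
    by_contra hzb
    by_cases hza : z = a
    · exact hyb (F1 y (hza ▸ hz).symm)
    by_cases hzc : z = c
    · exact hyb (F2 y (hzc ▸ hz).symm)
    · exact hG4 ⟨z, y, b, a, hz.symm, hyB, hab.symm, hzb, hza, hya⟩
  set S : Set (Fin n) := {a, b, c} ∪ T with hS
  have hSA : S ⊆ A := by
    rintro v (hv | hv)
    · rcases hv with rfl | rfl | rfl
      · exact hA v b hab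
      · exact hA v c hbc
      · exact hA v b hbc.symm
    · exact hA v b hv.1
  have hsub : touch G S ⊆ ({s(a,b), s(b,c)} : Set (Sym2 (Fin n))) ∪ touch G T := by
    rintro e ⟨he, v, hvS, hve⟩
    obtain ⟨w, rfl⟩ := Sym2.mem_iff_exists.mp hve
    have hadj : G.Adj v w := G.mem_edgeSet.mp he
    rcases hvS with (hv | hv | hv) | hvT
    · have hw' := F1 w (hv ▸ hadj)
      exact Or.inl (by rw [hv, hw']; simp)
    · have hadj' : G.Adj b w := hv ▸ hadj
      by_cases hwa : w = a
      · exact Or.inl (by rw [hv, hwa, Sym2.eq_swap]; simp)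
      by_cases hwc : w = c
      · exact Or.inl (by rw [hv, hwc]; simp)
      · have hwT : w ∈ T := ⟨hadj'.symm, hwa, hwc⟩
        exact Or.inr ⟨he, w, hwT, Sym2.mem_mk_right v w⟩
    · have hw' := F2 w (hv ▸ hadj)
      exact Or.inl (by rw [hv, hw', Sym2.eq_swap]; simp)
    · exact Or.inr ⟨he, v, hvT, Sym2.mem_mk_left v w⟩
  have htouchT : (touch G T).ncard ≤ T.ncard := by
    apply touch_ncard_le
    intro y hy z z' hz hz'
    rw [F3 y hy z hz, F3 y hy z' hz']
  have htouch : (touch G S).ncard ≤ 2 + T.ncard := by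
    have h0 := Set.ncard_union_le ({s(a,b), s(b,c)} : Set (Sym2 (Fin n))) (touch G T)
    have h1 := Set.ncard_insert_le (s(a,b) : Sym2 (Fin n)) {s(b,c)}
    have h2 := Set.ncard_singleton (s(b,c) : Sym2 (Fin n))
    have h3 := Set.ncard_le_ncard hsub (Set.toFinite _)
    omega
  have haT : a ∉ T := fun h => h.2.1 rfl
  have hbT : b ∉ T := fun h => h.1.ne rfl
  have hcT : c ∉ T := fun h => h.2.2 rfl
  have hScard : S.ncard = 3 + T.ncard := by
    rw [hS]
    rw [show ({a, b, c} : Set (Fin n)) ∪ T = insert a (insert b (insert c T)) by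
      simp [Set.insert_union]]
    rw [Set.ncard_insert_of_notMem (by simp [haT, hnab, hac]) (Set.toFinite _),
      Set.ncard_insert_of_notMem (by simp [hbT, hnbc]) (Set.toFinite _),
      Set.ncard_insert_of_notMem hcT (Set.toFinite _)]
    omega
  have hTpos : 1 ≤ T.ncard := by
    rw [Nat.one_le_iff_ne_zero]
    intro h0
    rw [Set.ncard_eq_zero (Set.toFinite _)] at h0
    exact absurd (h0 ▸ hxT) (Set.notMem_empty x)
  have hcardA : S.ncard ≤ A.ncard := Set.ncard_le_ncard hSA (Set.toFinite _)
  apply key_step IH hG hA hAm hSA ⟨a, Or.inl (by simp)⟩ htouch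
  have harith := gP_A4 (show 4 ≤ S.ncard by omega) hcardA
  omega

/-- Case: no path on 4 vertices, triangle-or-path `a b c`, nothing else attached. -/
lemma stepP3n {m : ℕ}
    (IH : ∀ (G : SimpleGraph (Fin n)) (A : Set (Fin n)), ¬ HasP5 G →
      (∀ u v, G.Adj u v → u ∈ A) → A.ncard ≤ m → G.edgeSet.ncard ≤ gP A.ncard)
    (hG : ¬ HasP5 G) (hG4 : ¬ HasP4 G)
    (hA : ∀ u v, G.Adj u v → u ∈ A) (hAm : A.ncard ≤ m + 1)
    {a b c : Fin n}
    (hab : G.Adj a b) (hbc : G.Adj b c) (hac : a ≠ c)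
    (hx : ¬ ∃ x, G.Adj x b ∧ x ≠ a ∧ x ≠ c) :
    G.edgeSet.ncard ≤ gP A.ncard := by
  have hnab : a ≠ b := hab.ne
  have hnbc : b ≠ c := hbc.ne
  have F1 : ∀ w, G.Adj a w → w = b ∨ w = c := by
    intro w hw
    by_contra hcon
    push_neg at hcon
    obtain ⟨hwb, hwc⟩ := hcon
    exact hG4 ⟨w, a, b, c, hw.symm, hab, hbc, hwb, hwc, hac⟩
  have F2 : ∀ w, G.Adj c w → w = b ∨ w = a := by
    intro w hw
    by_contra hcon
    push_neg at hcon
    obtain ⟨hwb, hwa⟩ := hcon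
    exact hG4 ⟨w, c, b, a, hw.symm, hbc.symm, hab.symm, hwb, hwa, Ne.symm hac⟩
  have F3 : ∀ w, G.Adj b w → w = a ∨ w = c := by
    intro w hw
    by_contra hcon
    push_neg at hcon
    obtain ⟨hwa, hwc⟩ := hcon
    exact hx ⟨w, hw.symm, hwa, hwc⟩
  set S : Set (Fin n) := {a, b, c} with hS
  have hSA : S ⊆ A := by
    rintro v (rfl | rfl | rfl)
    · exact hA v b hab
    · exact hA v c hbc
    · exact hA v b hbc.symm
  have hsub : touch G S ⊆ ({s(a,b), s(b,c), s(a,c)} : Set (Sym2 (Fin n))) := by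
    rintro e ⟨he, v, hvS, hve⟩
    obtain ⟨w, rfl⟩ := Sym2.mem_iff_exists.mp hve
    have hadj : G.Adj v w := G.mem_edgeSet.mp he
    rcases hvS with hv | hv | hv
    · rcases F1 w (hv ▸ hadj) with hw | hw <;>
        · rw [hv, hw]; simp
    · rcases F3 w (hv ▸ hadj) with hw | hw <;>
        · rw [hv, hw]; first | simp | (rw [Sym2.eq_swap]; simp)
    · rcases F2 w (hv ▸ hadj) with hw | hw <;>
        · rw [hv, hw]; rw [Sym2.eq_swap]; simp
  have htouch : (touch G S).ncard ≤ 3 := by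
    refine le_trans (Set.ncard_le_ncard hsub (Set.toFinite _)) ?_
    have h1 := Set.ncard_insert_le (s(a,b) : Sym2 (Fin n)) {s(b,c), s(a,c)}
    have h2 := Set.ncard_insert_le (s(b,c) : Sym2 (Fin n)) {s(a,c)}
    have h3 := Set.ncard_singleton (s(a,c) : Sym2 (Fin n))
    omega
  have hScard : S.ncard = 3 := by
    rw [hS, Set.ncard_insert_of_notMem (by simp [hnab, hac]) (Set.toFinite _),
      Set.ncard_insert_of_notMem (by simp [hnbc]) (Set.toFinite _), Set.ncard_singleton]
  have hcardA : S.ncard ≤ A.ncard := Set.ncard_le_ncard hSA (Set.toFinite _)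
  apply key_step IH hG hA hAm hSA ⟨a, by simp [hS]⟩ htouch
  rw [hScard]
  have harith := gP_A2 (show 3 ≤ A.ncard by omega)
  omega

/-- Case: no path on 3 vertices; a single edge forms a component. -/
lemma stepP2 {m : ℕ}
    (IH : ∀ (G : SimpleGraph (Fin n)) (A : Set (Fin n)), ¬ HasP5 G →
      (∀ u v, G.Adj u v → u ∈ A) → A.ncard ≤ m → G.edgeSet.ncard ≤ gP A.ncard)
    (hG : ¬ HasP5 G) (hG3 : ¬ HasP3 G)
    (hA : ∀ u v, G.Adj u v → u ∈ A) (hAm : A.ncard ≤ m + 1)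
    {a b : Fin n} (hab : G.Adj a b) :
    G.edgeSet.ncard ≤ gP A.ncard := by
  have hnab : a ≠ b := hab.ne
  have F1 : ∀ w, G.Adj a w → w = b := by
    intro w hw
    by_contra hwb
    exact hG3 ⟨w, a, b, hw.symm, hab, hwb⟩
  have F2 : ∀ w, G.Adj b w → w = a := by
    intro w hw
    by_contra hwa
    exact hG3 ⟨w, b, a, hw.symm, hab.symm, hwa⟩
  set S : Set (Fin n) := {a, b} with hS
  have hSA : S ⊆ A := by
    rintro v (rfl | rfl)
    · exact hA v b hab
    · exact hA v a hab.symm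
  have hsub : touch G S ⊆ ({s(a,b)} : Set (Sym2 (Fin n))) := by
    rintro e ⟨he, v, hvS, hve⟩
    obtain ⟨w, rfl⟩ := Sym2.mem_iff_exists.mp hve
    have hadj : G.Adj v w := G.mem_edgeSet.mp he
    rcases hvS with hv | hv
    · have hw' := F1 w (hv ▸ hadj)
      rw [hv, hw']; simp
    · have hw' := F2 w (hv ▸ hadj)
      rw [hv, hw', Sym2.eq_swap]; simp
  have htouch : (touch G S).ncard ≤ 1 := by
    refine le_trans (Set.ncard_le_ncard hsub (Set.toFinite _)) ?_
    rw [Set.ncard_singleton]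
  have hScard : S.ncard = 2 := by
    rw [hS, Set.ncard_insert_of_notMem (by simp [hnab]) (Set.toFinite _), Set.ncard_singleton]
  have hcardA : S.ncard ≤ A.ncard := Set.ncard_le_ncard hSA (Set.toFinite _)
  apply key_step IH hG hA hAm hSA ⟨a, by simp [hS]⟩ htouch
  rw [hScard]
  have harith := gP_A1 (show 2 ≤ A.ncard by omega)
  omega

lemma edgeSet_ncard_zero {G : SimpleGraph (Fin n)} (h : ¬ ∃ a b, G.Adj a b) :
    G.edgeSet.ncard = 0 := by
  have : G.edgeSet = ∅ := by
    rw [Set.eq_empty_iff_forall_notMem]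
    intro e
    refine Sym2.ind (fun u v huv => ?_) e
    exact h ⟨u, v, G.mem_edgeSet.mp huv⟩
  rw [this, Set.ncard_empty]

/-- The key upper bound: a `P₅`-free graph whose edges live inside a vertex set `A`
has at most `gP |A|` edges. -/
lemma key (m : ℕ) : ∀ (G : SimpleGraph (Fin n)) (A : Set (Fin n)), ¬ HasP5 G →
    (∀ u v, G.Adj u v → u ∈ A) → A.ncard ≤ m → G.edgeSet.ncard ≤ gP A.ncard := by
  induction m with
  | zero =>
    intro G A hG hA hm
    by_cases h : ∃ a b, G.Adj a b
    · obtain ⟨a, b, hab⟩ := h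
      have h1 : a ∈ A := hA _ _ hab
      have h2 : A.ncard ≠ 0 := by
        intro h0
        rw [Set.ncard_eq_zero (Set.toFinite _)] at h0
        exact absurd (h0 ▸ h1) (Set.notMem_empty a)
      omega
    · rw [edgeSet_ncard_zero h]; exact Nat.zero_le _
  | succ m IH =>
    intro G A hG hA hm
    by_cases h2 : ∃ a b, G.Adj a b
    swap
    · rw [edgeSet_ncard_zero h2]; exact Nat.zero_le _
    by_cases h4 : HasP4 G
    · obtain ⟨a, b, c, d, hab, hbc, hcd, hac, had, hbd⟩ := h4
      by_cases hx2 : ∃ x, G.Adj x b ∧ x ≠ a ∧ x ≠ c ∧ x ≠ d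
      · obtain ⟨x, hh1, hh2, hh3, hh4⟩ := hx2
        exact stepP4 IH hG hA hm hab hbc hcd hac had hbd hh1 hh2 hh3 hh4
      by_cases hx3 : ∃ x, G.Adj x c ∧ x ≠ a ∧ x ≠ b ∧ x ≠ d
      · obtain ⟨x, hh1, hxa, hxb, hxd⟩ := hx3
        exact stepP4 IH hG hA hm hcd.symm hbc.symm hab.symm (Ne.symm hbd) (Ne.symm had)
          (Ne.symm hac) hh1 hxd hxb hxa
      · exact stepP4n IH hG hA hm hab hbc hcd hac had hbd hx2 hx3
    by_cases h3 : HasP3 G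
    · obtain ⟨a, b, c, hab, hbc, hac⟩ := h3
      by_cases hx : ∃ x, G.Adj x b ∧ x ≠ a ∧ x ≠ c
      · obtain ⟨x, hh1, hh2, hh3⟩ := hx
        exact stepP3 IH hG h4 hA hm hab hbc hac hh1 hh2 hh3
      · exact stepP3n IH hG h4 hA hm hab hbc hac hx
    · obtain ⟨a, b, hab⟩ := h2
      exact stepP2 IH hG h3 hA hm hab

lemma hasP5_contains (h : HasP5 G) : Contains G (SimpleGraph.pathGraph 5) := by
  obtain ⟨a, b, c, d, e, hab, hbc, hcd, hde, hac, had, hae, hbd, hbe, hce⟩ := h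
  have h1 : a ≠ b := hab.ne
  have h2 : b ≠ c := hbc.ne
  have h3 : c ≠ d := hcd.ne
  have h4 : d ≠ e := hde.ne
  have hinj : Function.Injective (fun i : Fin 5 => if i = 0 then a else if i = 1 then b
      else if i = 2 then c else if i = 3 then d else e) := by
    intro i j hij
    simp only at hij
    fin_cases i <;> fin_cases j <;> simp_all
  have hmap : ∀ i j : Fin 5, (pathGraph 5).Adj i j →
      G.Adj ((fun i : Fin 5 => if i = 0 then a else if i = 1 then b
        else if i = 2 then c else if i = 3 then d else e) i)
        ((fun i : Fin 5 => if i = 0 then a else if i = 1 then b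
        else if i = 2 then c else if i = 3 then d else e) j) := by
    intro i j hij
    rw [pathGraph_adj] at hij
    fin_cases i <;> fin_cases j <;> simp_all <;>
      first
        | exact hab | exact hab.symm | exact hbc | exact hbc.symm
        | exact hcd | exact hcd.symm | exact hde | exact hde.symm
  exact ⟨⟨_, fun {x y} h => hmap x y h⟩, fun x y h => hinj h⟩

/-- Extremal graph: disjoint K4's on blocks {4i,...,4i+3}, plus a clique on the remainder. -/
def Gex (n : ℕ) : SimpleGraph (Fin n) :=
  SimpleGraph.fromRel (fun u v => u.val / 4 = v.val / 4)

lemma Gex_adj {n : ℕ} {u v : Fin n} :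
    (Gex n).Adj u v ↔ u ≠ v ∧ u.val / 4 = v.val / 4 := by
  simp [Gex, SimpleGraph.fromRel_adj]
  tauto

lemma Gex_free (n : ℕ) : ¬ Contains (Gex n) (SimpleGraph.pathGraph 5) := by
  rintro ⟨f, hinj⟩
  have adj : ∀ i j : Fin 5, (SimpleGraph.pathGraph 5).Adj i j →
      (f i ≠ f j ∧ (f i).val / 4 = (f j).val / 4) := by
    intro i j h
    exact Gex_adj.mp (f.map_rel h)
  have h01 : (SimpleGraph.pathGraph 5).Adj 0 1 := by rw [pathGraph_adj]; left; rfl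
  have h12 : (SimpleGraph.pathGraph 5).Adj 1 2 := by rw [pathGraph_adj]; left; rfl
  have h23 : (SimpleGraph.pathGraph 5).Adj 2 3 := by rw [pathGraph_adj]; left; rfl
  have h34 : (SimpleGraph.pathGraph 5).Adj 3 4 := by rw [pathGraph_adj]; left; rfl
  obtain ⟨-, e01⟩ := adj _ _ h01
  obtain ⟨-, e12⟩ := adj _ _ h12
  obtain ⟨-, e23⟩ := adj _ _ h23
  obtain ⟨-, e34⟩ := adj _ _ h34
  have ne : ∀ i j : Fin 5, i ≠ j → (f i).val ≠ (f j).val := by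
    intro i j hij hval
    exact hij (hinj (Fin.val_injective hval))
  have n01 := ne 0 1 (by decide); have n02 := ne 0 2 (by decide)
  have n03 := ne 0 3 (by decide); have n04 := ne 0 4 (by decide)
  have n12 := ne 1 2 (by decide); have n13 := ne 1 3 (by decide)
  have n14 := ne 1 4 (by decide); have n23 := ne 2 3 (by decide)
  have n24 := ne 2 4 (by decide); have n34 := ne 3 4 (by decide)
  omega

instance {n : ℕ} : DecidableRel (Gex n).Adj := fun _ _ => decidable_of_iff' _ Gex_adj

lemma filter_univ_card {n : ℕ} (p : ℕ → Prop) [DecidablePred p] :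
    ((Finset.univ : Finset (Fin n)).filter (fun u => p u.val)).card
      = ((Finset.range n).filter p).card := by
  rw [← Finset.card_image_of_injective _ Fin.val_injective]
  congr 1
  ext x
  simp only [Finset.mem_image, Finset.mem_filter, Finset.mem_univ, true_and,
    Finset.mem_range]
  constructor
  · rintro ⟨a, pa, rfl⟩; exact ⟨a.isLt, pa⟩
  · rintro ⟨hx, px⟩; exact ⟨⟨x, hx⟩, px, rfl⟩

lemma bucket_card (n i : ℕ) :
    ((Finset.range n).filter (fun u => u / 4 = i)).card = min (4*i+4) n - 4*i := by
  have : ((Finset.range n).filter (fun u => u / 4 = i)) = Finset.Ico (4*i) (min (4*i+4) n) := by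
    ext u; simp only [Finset.mem_filter, Finset.mem_range, Finset.mem_Ico]; omega
  rw [this, Nat.card_Ico]

lemma Gex_degree {n : ℕ} (v : Fin n) :
    (Gex n).degree v = min (4*(v.val/4)+4) n - 4*(v.val/4) - 1 := by
  classical
  rw [← SimpleGraph.card_neighborFinset_eq_degree]
  have h1 : (Gex n).neighborFinset v
      = ((Finset.univ : Finset (Fin n)).filter (fun u => u.val / 4 = v.val / 4)).erase v := by
    ext u
    simp only [SimpleGraph.mem_neighborFinset, Gex_adj, Finset.mem_erase, Finset.mem_filter,
      Finset.mem_univ, true_and]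
    constructor
    · rintro ⟨h, h2⟩; exact ⟨h.symm, h2.symm⟩
    · rintro ⟨h, h2⟩; exact ⟨h.symm, h2.symm⟩
  rw [h1, Finset.card_erase_of_mem (by simp), filter_univ_card (fun u => u / 4 = v.val / 4),
    bucket_card]

lemma sum_deg (n : ℕ) :
    ∑ v ∈ Finset.range n, (min (4*(v/4)+4) n - 4*(v/4) - 1)
      = 12 * (n/4) + (n % 4) * (n % 4 - 1) := by
  have hq : 4 * (n/4) ≤ n := Nat.mul_div_le n 4
  rw [Finset.range_eq_Ico, ← Finset.sum_Ico_consecutive _ (Nat.zero_le (4*(n/4))) hq]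
  have h1 : ∑ v ∈ Finset.Ico 0 (4*(n/4)), (min (4*(v/4)+4) n - 4*(v/4) - 1)
      = 12 * (n/4) := by
    rw [Finset.sum_congr rfl (g := fun _ => 3)]
    · simp [Nat.card_Ico]; ring
    · intro v hv
      simp only [Finset.mem_Ico] at hv
      omega
  have h2 : ∑ v ∈ Finset.Ico (4*(n/4)) n, (min (4*(v/4)+4) n - 4*(v/4) - 1)
      = (n % 4) * (n % 4 - 1) := by
    rw [Finset.sum_congr rfl (g := fun _ => n % 4 - 1)]
    · simp [Nat.card_Ico]
      omega
    · intro v hv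
      simp only [Finset.mem_Ico] at hv
      omega
  rw [h1, h2]

lemma Gex_card (n : ℕ) : (Gex n).edgeFinset.card = gP n := by
  have hs := SimpleGraph.sum_degrees_eq_twice_card_edges (Gex n)
  have h2 : ∑ v, (Gex n).degree v
      = ∑ v ∈ Finset.range n, (min (4*(v/4)+4) n - 4*(v/4) - 1) := by
    rw [← Fin.sum_univ_eq_sum_range]
    exact Finset.sum_congr rfl fun v _ => Gex_degree v
  rw [h2, sum_deg] at hs
  have hr : n % 4 < 4 := Nat.mod_lt _ (by norm_num)
  set E := (Gex n).edgeFinset.card with hE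
  unfold gP
  interval_cases h : n % 4 <;> split_ifs <;>
    first
      | omega
      | exact (False.elim (by assumption))


theorem extremal_number_P5 (n : ℕ) (hn : 3 ≤ n) :
    IsGreatest {m | ∃ G : SimpleGraph (Fin n),
        ¬ Contains G (SimpleGraph.pathGraph 5) ∧ G.edgeSet.ncard = m}
      (if n % 4 = 0 then 3 * n / 2
       else if n % 4 = 2 then 3 * n / 2 - 2
       else (3 * n - 3) / 2) := by
  have hgoal : (if n % 4 = 0 then 3 * n / 2
       else if n % 4 = 2 then 3 * n / 2 - 2
       else (3 * n - 3) / 2) = gP n := rfl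
  rw [hgoal]
  constructor
  · refine ⟨Gex n, Gex_free n, ?_⟩
    rw [← SimpleGraph.coe_edgeFinset, Set.ncard_coe_finset]
    exact Gex_card n
  · rintro x ⟨G, hfree, rfl⟩
    have hno : ¬ HasP5 G := fun h => hfree (hasP5_contains h)
    have hkey := key (n := n) n G Set.univ hno (fun u v _ => trivial)
      (by simp [Set.ncard_univ])
    simpa [Set.ncard_univ] using hkey
end Cases
end

section
/- R(P_3, P_3, P_m) = m for all m ≥ 5. -/
open SimpleGraph

/-! ### Auxiliary: base case `n = 5` by kernel computation -/

def ep (i j : Fin 5) : ℕ :=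
  let a := min i.1 j.1; let b := max i.1 j.1; b*(b-1)/2 + a

def adjN (m : ℕ) (i j : Fin 5) : Bool :=
  i != j && m.testBit (ep i j)

def chainB (m : ℕ) : List (Fin 5) → Bool
  | a :: b :: t => adjN m a b && chainB m (b :: t)
  | _ => true

def inserts {α : Type} (a : α) : List α → List (List α)
  | [] => [[a]]
  | b :: t => (a :: b :: t) :: (inserts a t).map (b :: ·)

def perms {α : Type} : List α → List (List α)
  | [] => [[]]
  | a :: t => (perms t).flatMap (inserts a)

set_option maxHeartbeats 4000000 in
set_option maxRecDepth 20000 in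
theorem base5 : ∀ m < 1024,
    (∀ i : Fin 5, ((Finset.univ.filter (fun j => j ≠ i ∧ adjN m i j = false)).card ≤ 2)) →
    ((perms (List.finRange 5)).any (chainB m)) := by decide

theorem mem_inserts {α : Type} (a : α) : ∀ (t : List α) (l : List α),
    l ∈ inserts a t → l.Perm (a :: t)
  | [], l, h => by simp [inserts] at h; simp [h]
  | b :: t, l, h => by
    rcases (by simpa [inserts] using h) with h | ⟨l', hl', rfl⟩
    · simp [h]
    · exact ((mem_inserts a t l' hl').cons b).trans (List.Perm.swap a b t)

theorem mem_perms {α : Type} : ∀ (t : List α) (l : List α), l ∈ perms t → l.Perm t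
  | [], l, h => by
    have : l = [] := by simpa [perms] using h
    simp [this]
  | a :: t, l, h => by
    rcases (by simpa [perms] using h) with ⟨l', hl', hmem⟩
    exact (mem_inserts a l' l hmem).trans ((mem_perms t l' hl').cons a)

theorem chainB_chain' (m : ℕ) : ∀ l : List (Fin 5), chainB m l = true →
    l.Chain' (fun a b => adjN m a b = true)
  | [], _ => List.isChain_nil
  | [a], _ => List.isChain_singleton a
  | a :: b :: t, h => by
    rw [chainB, Bool.and_eq_true] at h
    exact List.isChain_cons_cons.2 ⟨h.1, chainB_chain' m (b :: t) h.2⟩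

def encode (f : ℕ → Bool) : ℕ → ℕ
  | 0 => 0
  | n+1 => 2^n * (f n).toNat + encode f n

theorem encode_lt (f : ℕ → Bool) : ∀ n, encode f n < 2^n
  | 0 => by simp [encode]
  | n+1 => by
    have := encode_lt f n
    have : (f n).toNat ≤ 1 := Bool.toNat_le _
    simp only [encode, pow_succ]
    nlinarith [encode_lt f n]

theorem testBit_encode (f : ℕ → Bool) : ∀ n j, j < n → (encode f n).testBit j = f j
  | 0, j, h => absurd h (Nat.not_lt_zero j)
  | n+1, j, h => by
    rw [encode, Nat.testBit_two_pow_mul_add _ (encode_lt f n)]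
    rcases lt_or_eq_of_le (Nat.lt_succ_iff.mp h) with h' | rfl
    · rw [if_pos h', testBit_encode f n j h']
    · rw [if_neg (lt_irrefl j), Nat.sub_self, Nat.testBit_bool_toNat]
      simp

theorem epLt : ∀ i j : Fin 5, i ≠ j → ep i j < 10 := by decide

theorem epInj : ∀ i j i' j' : Fin 5, i ≠ j → i' ≠ j' → ep i j = ep i' j' →
    (i = i' ∧ j = j') ∨ (i = j' ∧ j = i') := by decide

/-- Base case: a 5-element vertex set where each vertex has at most 2 non-neighbours
has a Hamiltonian path. -/
theorem ham5 {V : Type*} [DecidableEq V] (G : SimpleGraph V) [DecidableRel G.Adj] (s : Finset V) (hcard : s.card = 5)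
    (hdeg : ∀ v ∈ s, (s.filter (fun u => u ≠ v ∧ ¬ G.Adj v u)).card ≤ 2) :
    ∃ l : List V, l.Nodup ∧ l.toFinset = s ∧ l.Chain' G.Adj := by
  classical
  -- enumerate the vertices of `s`
  let e := s.equivFin
  let w : Fin 5 → V := fun i => (e.symm (Fin.cast hcard.symm i) : V)
  have hw_inj : Function.Injective w := by
    intro a b hab
    have := e.symm.injective (Subtype.val_injective hab)
    simpa [Fin.ext_iff] using congrArg Fin.val this
  have hw_mem : ∀ i, w i ∈ s := fun i => (e.symm _).2
  have hw_surj : ∀ x ∈ s, ∃ i, w i = x := by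
    intro x hx
    refine ⟨Fin.cast hcard (e ⟨x, hx⟩), ?_⟩
    simp [w]
  -- encode the induced graph as a bitmask
  let m : ℕ := encode (fun k => decide (∃ i j : Fin 5, i ≠ j ∧ ep i j = k ∧ G.Adj (w i) (w j))) 10
  have hkey : ∀ i j : Fin 5, adjN m i j = true ↔ (i ≠ j ∧ G.Adj (w i) (w j)) := by
    intro i j
    unfold adjN
    rw [Bool.and_eq_true, bne_iff_ne]
    constructor
    · rintro ⟨hne, hbit⟩
      refine ⟨hne, ?_⟩
      rw [testBit_encode _ _ _ (epLt i j hne), decide_eq_true_eq] at hbit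
      obtain ⟨i', j', hne', hep, hadj⟩ := hbit
      rcases epInj i' j' i j hne' hne hep with ⟨rfl, rfl⟩ | ⟨rfl, rfl⟩
      · exact hadj
      · exact hadj.symm
    · rintro ⟨hne, hadj⟩
      refine ⟨hne, ?_⟩
      rw [testBit_encode _ _ _ (epLt i j hne), decide_eq_true_eq]
      exact ⟨i, j, hne, rfl, hadj⟩
  -- degree condition transfers
  have hdegm : ∀ i : Fin 5,
      ((Finset.univ.filter (fun j => j ≠ i ∧ adjN m i j = false)).card ≤ 2) := by
    intro i
    refine le_trans (Finset.card_le_card_of_injOn w ?_ (fun a _ b _ hab => hw_inj hab))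
      (hdeg (w i) (hw_mem i))
    intro j hj
    rw [Finset.mem_coe, Finset.mem_filter] at hj ⊢
    obtain ⟨-, hne, hfalse⟩ := hj
    refine ⟨hw_mem j, fun h => hne (hw_inj h), fun hadj => ?_⟩
    rw [(hkey i j).2 ⟨fun h => hne h.symm, hadj⟩] at hfalse
    simp at hfalse
  -- apply the verified base case
  have hm10 : m < 1024 := encode_lt _ 10
  have hany := base5 m hm10 hdegm
  rw [List.any_eq_true] at hany
  obtain ⟨l₀, hl₀mem, hl₀chain⟩ := hany
  have hperm : l₀.Perm (List.finRange 5) := mem_perms _ _ hl₀mem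
  have hl₀nodup : l₀.Nodup := hperm.nodup_iff.2 (List.nodup_finRange 5)
  refine ⟨l₀.map w, hl₀nodup.map hw_inj, ?_, ?_⟩
  · ext x
    simp only [List.mem_toFinset, List.mem_map]
    constructor
    · rintro ⟨i, -, rfl⟩; exact hw_mem i
    · intro hx
      obtain ⟨i, rfl⟩ := hw_surj x hx
      exact ⟨i, hperm.mem_iff.2 (List.mem_finRange i), rfl⟩
  · unfold List.Chain'
    rw [List.isChain_map]
    exact (chainB_chain' m l₀ hl₀chain).imp (fun a b h => ((hkey a b).1 h).2)

/-- Induction: any `(n+5)`-element vertex set where each vertex has at most 2 non-neighbours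
has a Hamiltonian path. -/
theorem ham_aux {V : Type*} [DecidableEq V] (G : SimpleGraph V) [DecidableRel G.Adj] :
    ∀ (n : ℕ) (s : Finset V), s.card = n + 5 →
    (∀ v ∈ s, (s.filter (fun u => u ≠ v ∧ ¬ G.Adj v u)).card ≤ 2) →
    ∃ l : List V, l.Nodup ∧ l.toFinset = s ∧ l.Chain' G.Adj := by
  intro n
  induction n with
  | zero => exact fun s h1 h2 => ham5 G s h1 h2
  | succ k ih =>
    intro s hcard hdeg
    obtain ⟨v, hv⟩ : s.Nonempty := Finset.card_pos.mp (by omega)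
    have hcard' : (s.erase v).card = k + 5 := by rw [Finset.card_erase_of_mem hv]; omega
    have hsub : s.erase v ⊆ s := Finset.erase_subset v s
    obtain ⟨l, hnd, hts, hch⟩ := ih (s.erase v) hcard'
      (fun u hu => le_trans (Finset.card_le_card (Finset.filter_subset_filter _ hsub))
        (hdeg u (hsub hu)))
    have hvl : v ∉ l := fun h => (Finset.notMem_erase v s) (hts ▸ List.mem_toFinset.2 h)
    have hlen : l.length = k + 5 := by
      rw [← List.toFinset_card_of_nodup hnd, hts, hcard']
    have hmem : ∀ x ∈ l, x ∈ s.erase v := fun x hx => hts ▸ List.mem_toFinset.2 hx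
    have hins : insert v (s.erase v) = s := Finset.insert_erase hv
    rcases l with _ | ⟨a, _ | ⟨b, _ | ⟨c, _ | ⟨d, t⟩⟩⟩⟩
    · simp at hlen
    · simp at hlen
    · simp at hlen
    · simp at hlen
    -- l = a :: b :: c :: d :: t
    set L := a :: b :: c :: d :: t with hL
    have hLne : L ≠ [] := by simp [hL]
    by_cases hva : G.Adj v a
    · refine ⟨v :: L, List.nodup_cons.2 ⟨hvl, hnd⟩, ?_, List.isChain_cons_cons.2 ⟨hva, hch⟩⟩
      rw [List.toFinset_cons, hts, hins]
    · set lastL := L.getLast hLne with hlastL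
      by_cases hvz : G.Adj v lastL
      · refine ⟨v :: L.reverse, ?_, ?_, ?_⟩
        · exact List.nodup_cons.2 ⟨fun h => hvl (List.mem_reverse.mp h), List.nodup_reverse.2 hnd⟩
        · rw [List.toFinset_cons, List.toFinset_reverse, hts, hins]
        · refine List.isChain_cons.2 ⟨?_, List.isChain_reverse.mpr (hch.imp (fun x y h => h.symm))⟩
          intro y hy
          rw [List.head?_reverse, List.getLast?_eq_getLast hLne] at hy
          rw [← Option.some_inj.mp hy]
          exact hvz
      · -- v is nonadjacent to both ends, hence adjacent to all interior vertices
        have hlast_mem : lastL ∈ L := List.getLast_mem hLne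
        have hlast_dt : lastL ∈ d :: t := by
          have h3 : lastL = (d :: t).getLast (by simp) := rfl
          exact h3 ▸ List.getLast_mem _
        obtain ⟨hna, hnd1⟩ := List.nodup_cons.1 hnd
        obtain ⟨hnb, hnd2⟩ := List.nodup_cons.1 hnd1
        obtain ⟨hnc, hnd3⟩ := List.nodup_cons.1 hnd2
        have hmemS : ∀ x ∈ L, x ∈ s ∧ x ≠ v := by
          intro x hx
          have := Finset.mem_erase.1 (hmem x hx)
          exact ⟨this.2, this.1⟩
        have halast : a ≠ lastL := by
          intro h; exact hna (h ▸ List.mem_cons_of_mem b (List.mem_cons_of_mem c hlast_dt))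
        have key : ∀ x ∈ L, x ≠ a → x ≠ lastL → G.Adj v x := by
          intro x hxL hxa hxlast
          by_contra hnadj
          have hsubset : ({a, x, lastL} : Finset V) ⊆
              s.filter (fun u => u ≠ v ∧ ¬ G.Adj v u) := by
            intro y hy
            simp only [Finset.mem_insert, Finset.mem_singleton] at hy
            rw [Finset.mem_filter]
            rcases hy with h | h | h
            · rw [h]; exact ⟨(hmemS a (by simp [hL])).1, (hmemS a (by simp [hL])).2, hva⟩
            · rw [h]; exact ⟨(hmemS x hxL).1, (hmemS x hxL).2, hnadj⟩
            · rw [h]; exact ⟨(hmemS lastL hlast_mem).1, (hmemS lastL hlast_mem).2, hvz⟩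
          have hcard3 : ({a, x, lastL} : Finset V).card = 3 := by
            rw [Finset.card_insert_of_notMem (by simp [Ne.symm hxa, halast]),
              Finset.card_insert_of_notMem (by simp [hxlast]), Finset.card_singleton]
          have := le_trans (hcard3 ▸ Finset.card_le_card hsubset) (hdeg v hv)
          omega
        have hb : G.Adj v b := by
          refine key b (by simp [hL]) (fun h => hna (h ▸ (List.mem_cons_self (a := a)))) ?_
          intro h; exact hnb (h ▸ List.mem_cons_of_mem c hlast_dt)
        have hc : G.Adj v c := by
          refine key c (by simp [hL]) ?_ ?_
          · intro h; exact hna (h ▸ List.mem_cons_of_mem b ((List.mem_cons_self (a := c))))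
          · intro h; exact hnc (h ▸ hlast_dt)
        rw [hL] at hch
        obtain ⟨hab, hch1⟩ := List.isChain_cons_cons.1 hch
        obtain ⟨-, hch2⟩ := List.isChain_cons_cons.1 hch1
        have hp : (a :: b :: v :: c :: d :: t).Perm (v :: L) := by
          rw [hL]
          exact ((List.Perm.swap v b (c :: d :: t)).cons a).trans
            (List.Perm.swap v a (b :: c :: d :: t))
        refine ⟨a :: b :: v :: c :: d :: t, ?_, ?_, ?_⟩
        · exact hp.nodup_iff.2 (List.nodup_cons.2 ⟨hvl, hnd⟩)
        · rw [List.toFinset_eq_of_perm _ _ hp, List.toFinset_cons, hts, hins]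
        · exact List.isChain_cons_cons.2 ⟨hab, List.isChain_cons_cons.2 ⟨hb.symm,
            List.isChain_cons_cons.2 ⟨hc, hch2⟩⟩⟩

theorem contains_p3 {V : Type*} (G : SimpleGraph V) {x y z : V}
    (hxy : G.Adj x y) (hyz : G.Adj y z) (hxz : x ≠ z) :
    Contains G (SimpleGraph.pathGraph 3) := by
  refine ⟨⟨![x, y, z], ?_⟩, ?_⟩
  · intro a b hab
    rw [pathGraph_adj] at hab
    fin_cases a <;> fin_cases b <;> simp_all <;>
      first
        | exact hxy | exact hxy.symm | exact hyz | exact hyz.symm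
  · intro a b hab
    fin_cases a <;> fin_cases b <;> simp_all <;>
      first
        | rfl
        | exact absurd hab (G.ne_of_adj hxy)
        | exact absurd hab (G.ne_of_adj hxy.symm)
        | exact absurd hab (G.ne_of_adj hyz)
        | exact absurd hab (G.ne_of_adj hyz.symm)
        | exact absurd hab hxz
        | exact absurd hab (Ne.symm hxz)
        | exact absurd hab.symm hxz

theorem ramsey_P3_P3_Pm (m : ℕ) (hm : 5 ≤ m) :
    IsLeast {N | ramseyProp3 N (SimpleGraph.pathGraph 3) (SimpleGraph.pathGraph 3)
      (SimpleGraph.pathGraph m)} m := by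
  classical
  constructor
  · -- membership: every 3-coloring of K_m works
    intro c
    by_cases hc0 : Contains (colorClass c 0) (SimpleGraph.pathGraph 3)
    · exact Or.inl hc0
    by_cases hc1 : Contains (colorClass c 1) (SimpleGraph.pathGraph 3)
    · exact Or.inr (Or.inl hc1)
    refine Or.inr (Or.inr ?_)
    set G2 := colorClass c 2 with hG2
    -- each color class 0/1 gives at most one "non-neighbour" per vertex
    have hone : ∀ (i : Fin 3), ¬ Contains (colorClass c i) (SimpleGraph.pathGraph 3) →
        ∀ v : Fin m, (Finset.univ.filter (fun u => u ≠ v ∧ c s(v, u) = i)).card ≤ 1 := by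
      intro i hno v
      rw [Finset.card_le_one]
      intro a ha b hb
      by_contra hab
      rw [Finset.mem_filter] at ha hb
      have hva : (colorClass c i).Adj v a :=
        (SimpleGraph.fromRel_adj (fun x y => c s(x, y) = i) v a).mpr
          ⟨fun h => ha.2.1 h.symm, Or.inl ha.2.2⟩
      have hvb : (colorClass c i).Adj v b :=
        (SimpleGraph.fromRel_adj (fun x y => c s(x, y) = i) v b).mpr
          ⟨fun h => hb.2.1 h.symm, Or.inl hb.2.2⟩
      exact hno (contains_p3 _ hva.symm hvb hab)
    have hdeg : ∀ v ∈ (Finset.univ : Finset (Fin m)),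
        (Finset.univ.filter (fun u => u ≠ v ∧ ¬ G2.Adj v u)).card ≤ 2 := by
      intro v _
      have hsub : Finset.univ.filter (fun u => u ≠ v ∧ ¬ G2.Adj v u) ⊆
          (Finset.univ.filter (fun u => u ≠ v ∧ c s(v, u) = 0)) ∪
          (Finset.univ.filter (fun u => u ≠ v ∧ c s(v, u) = 1)) := by
        intro u hu
        rw [Finset.mem_filter] at hu
        obtain ⟨-, hne, hnadj⟩ := hu
        have hne2 : c s(v, u) ≠ 2 := by
          intro h2
          exact hnadj ((SimpleGraph.fromRel_adj (fun x y => c s(x, y) = (2 : Fin 3)) v u).mpr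
            ⟨fun h => hne h.symm, Or.inl h2⟩)
        have : c s(v, u) = 0 ∨ c s(v, u) = 1 := by
          have hlt := (c s(v, u)).isLt
          have hval2 : ((c s(v, u)) : ℕ) ≠ 2 := fun h => hne2 (Fin.ext h)
          have : ((c s(v, u)) : ℕ) = 0 ∨ ((c s(v, u)) : ℕ) = 1 := by omega
          rcases this with h | h
          · exact Or.inl (Fin.ext h)
          · exact Or.inr (Fin.ext h)
        rw [Finset.mem_union, Finset.mem_filter, Finset.mem_filter]
        rcases this with h | h
        · exact Or.inl ⟨Finset.mem_univ u, hne, h⟩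
        · exact Or.inr ⟨Finset.mem_univ u, hne, h⟩
      calc (Finset.univ.filter (fun u => u ≠ v ∧ ¬ G2.Adj v u)).card
          ≤ _ := Finset.card_le_card hsub
        _ ≤ _ := Finset.card_union_le _ _
        _ ≤ 2 := by
            have h0 := hone 0 hc0 v
            have h1 := hone 1 hc1 v
            omega
    obtain ⟨l, hnd, hts, hch⟩ := ham_aux G2 (m - 5) Finset.univ
      (by simp only [Finset.card_univ, Fintype.card_fin]; omega) hdeg
    have hlen : l.length = m := by
      rw [← List.toFinset_card_of_nodup hnd, hts, Finset.card_univ, Fintype.card_fin]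
    have hget := List.isChain_iff_getElem.1 hch
    have hinj := List.nodup_iff_injective_get.1 hnd
    refine ⟨⟨fun i => l.get (Fin.cast hlen.symm i), ?_⟩, ?_⟩
    · intro u v huv
      rw [SimpleGraph.pathGraph_adj] at huv
      rcases huv with h | h
      · have hb : (u : ℕ) < l.length - 1 := by omega
        have := hget u (by omega)
        have e1 : (Fin.cast hlen.symm u) = ⟨(u : ℕ), by omega⟩ := rfl
        have e2 : (Fin.cast hlen.symm v) = ⟨(u : ℕ) + 1, by omega⟩ := by
          apply Fin.ext; simp [h.symm]
        show G2.Adj (l.get (Fin.cast hlen.symm u)) (l.get (Fin.cast hlen.symm v))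
        rw [e1, e2]
        exact this
      · have hb : (v : ℕ) < l.length - 1 := by omega
        have := hget v (by omega)
        have e1 : (Fin.cast hlen.symm v) = ⟨(v : ℕ), by omega⟩ := rfl
        have e2 : (Fin.cast hlen.symm u) = ⟨(v : ℕ) + 1, by omega⟩ := by
          apply Fin.ext; simp [h.symm]
        show G2.Adj (l.get (Fin.cast hlen.symm u)) (l.get (Fin.cast hlen.symm v))
        rw [e1, e2]
        exact this.symm
    · intro a b hab
      have h1 := hinj hab
      have h2 : (a : ℕ) = (b : ℕ) := by simpa using congrArg Fin.val h1
      exact Fin.ext h2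
  · -- lower bound
    intro N hN
    by_contra hlt
    push_neg at hlt
    have := hN (fun _ => 2)
    rcases this with h0 | h1 | h2
    · obtain ⟨f, -⟩ := h0
      have hadj : (SimpleGraph.pathGraph 3).Adj 0 1 := by
        rw [SimpleGraph.pathGraph_adj]; left; rfl
      have := f.map_rel hadj
      simp [colorClass, SimpleGraph.fromRel_adj] at this
    · obtain ⟨f, -⟩ := h1
      have hadj : (SimpleGraph.pathGraph 3).Adj 0 1 := by
        rw [SimpleGraph.pathGraph_adj]; left; rfl
      have := f.map_rel hadj
      simp [colorClass, SimpleGraph.fromRel_adj] at this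
    · obtain ⟨f, hf⟩ := h2
      have := Fintype.card_le_of_injective f hf
      simp only [Fintype.card_fin] at this
      omega
end

section
/- Let G be the graph obtained from the complete bipartite graph K_{3,4} by removing one edge. If each edge of G is colored red or blue, then G contains a red path P_3 or a blue path P_7. -/
open SimpleGraph

/-! ### Auxiliary computational core -/

namespace K34Aux

def P3L : List (List ℕ) := [[0,1,2],[0,2,1],[1,0,2],[1,2,0],[2,0,1],[2,1,0]]
def P4L : List (List ℕ) :=
  [[0,1,2,3],[0,1,3,2],[0,2,1,3],[0,2,3,1],[0,3,1,2],[0,3,2,1],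
   [1,0,2,3],[1,0,3,2],[1,2,0,3],[1,2,3,0],[1,3,0,2],[1,3,2,0],
   [2,0,1,3],[2,0,3,1],[2,1,0,3],[2,1,3,0],[2,3,0,1],[2,3,1,0],
   [3,0,1,2],[3,0,2,1],[3,1,0,2],[3,1,2,0],[3,2,0,1],[3,2,1,0]]

def edgeOk (e r0 r1 r2 i j : ℕ) : Bool :=
  decide (4*i+j ≠ e) && decide ([r0,r1,r2].getD i 4 ≠ j)

def bluem (e r0 r1 r2 : ℕ) : Bool := P3L.any fun pa => P4L.any fun pb =>
  (List.range 3).all fun k =>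
    edgeOk e r0 r1 r2 (pa.getD k 0) (pb.getD k 0) &&
    edgeOk e r0 r1 r2 (pa.getD k 0) (pb.getD (k+1) 0)

def mcheck (e r0 r1 r2 : ℕ) : Bool :=
  (decide (r0 = r1) && decide (r0 ≠ 4)) || (decide (r0 = r2) && decide (r0 ≠ 4)) ||
  (decide (r1 = r2) && decide (r1 ≠ 4)) || bluem e r0 r1 r2

set_option maxHeartbeats 4000000 in
set_option maxRecDepth 10000 in
theorem coreM : ((List.range 12).all fun e => (List.range 5).all fun r0 =>
    (List.range 5).all fun r1 => (List.range 5).all fun r2 => mcheck e r0 r1 r2) = true := by decide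

theorem P3facts : ∀ pa ∈ P3L,
    (∀ k < 3, pa.getD k 0 < 3) ∧ (∀ k < 3, ∀ k' < 3, k ≠ k' → pa.getD k 0 ≠ pa.getD k' 0) := by
  decide

theorem P4facts : ∀ pb ∈ P4L,
    (∀ k < 4, pb.getD k 0 < 4) ∧ (∀ k < 4, ∀ k' < 4, k ≠ k' → pb.getD k 0 ≠ pb.getD k' 0) := by
  decide

theorem contains_path (n : ℕ) {α : Type*} (Gr : SimpleGraph α) (v : ℕ → α)
    (hinj : ∀ a b, a < n → b < n → v a = v b → a = b)
    (hadj : ∀ k, k + 1 < n → Gr.Adj (v k) (v (k+1))) :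
    Contains Gr (SimpleGraph.pathGraph n) := by
  refine ⟨⟨fun x => v x.val, ?_⟩, ?_⟩
  · intro a b hab
    rw [SimpleGraph.pathGraph_adj] at hab
    rcases hab with h | h
    · have hlt : a.val + 1 < n := by have := b.isLt; omega
      have := hadj a.val hlt
      show Gr.Adj (v a.val) (v b.val)
      rw [← h]
      exact this
    · have hlt : b.val + 1 < n := by have := a.isLt; omega
      have := hadj b.val hlt
      show Gr.Adj (v a.val) (v b.val)
      rw [← h]
      exact this.symm
  · intro a b hab
    exact Fin.ext (hinj a.val b.val a.isLt b.isLt hab)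

set_option maxHeartbeats 1600000 in
theorem main (i0 : Fin 3) (j0 : Fin 4) (E : Sym2 (Fin 3 ⊕ Fin 4))
    (hE : ∀ (i : Fin 3) (j : Fin 4),
      (completeBipartiteGraph (Fin 3) (Fin 4) \ SimpleGraph.fromEdgeSet {E}).Adj
        (Sum.inl i) (Sum.inr j) ↔ ¬(i = i0 ∧ j = j0))
    (c : Sym2 (Fin 3 ⊕ Fin 4) → Fin 2) :
    Contains (SimpleGraph.fromRel (fun u v =>
      (completeBipartiteGraph (Fin 3) (Fin 4) \ SimpleGraph.fromEdgeSet {E}).Adj u v ∧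
        c s(u, v) = 0)) (SimpleGraph.pathGraph 3) ∨
    Contains (SimpleGraph.fromRel (fun u v =>
      (completeBipartiteGraph (Fin 3) (Fin 4) \ SimpleGraph.fromEdgeSet {E}).Adj u v ∧
        c s(u, v) = 1)) (SimpleGraph.pathGraph 7) := by
  classical
  set GG := completeBipartiteGraph (Fin 3) (Fin 4) \ SimpleGraph.fromEdgeSet {E} with hGG
  have hadj0 : ∀ (i : Fin 3) (j : Fin 4), ¬(i = i0 ∧ j = j0) → c s(Sum.inl i, Sum.inr j) = 0 →
      (SimpleGraph.fromRel fun u v => GG.Adj u v ∧ c s(u,v) = 0).Adj (Sum.inl i) (Sum.inr j) := by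
    intro i j hok hc
    rw [SimpleGraph.fromRel_adj]
    exact ⟨by simp, Or.inl ⟨(hE i j).2 hok, hc⟩⟩
  have hadj1 : ∀ (i : Fin 3) (j : Fin 4), ¬(i = i0 ∧ j = j0) → c s(Sum.inl i, Sum.inr j) = 1 →
      (SimpleGraph.fromRel fun u v => GG.Adj u v ∧ c s(u,v) = 1).Adj (Sum.inl i) (Sum.inr j) := by
    intro i j hok hc
    rw [SimpleGraph.fromRel_adj]
    exact ⟨by simp, Or.inl ⟨(hE i j).2 hok, hc⟩⟩
  -- a red path through a common column
  have redcol : ∀ (i i' : Fin 3) (j : Fin 4), i ≠ i' → ¬(i = i0 ∧ j = j0) → ¬(i' = i0 ∧ j = j0) →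
      c s(Sum.inl i, Sum.inr j) = 0 → c s(Sum.inl i', Sum.inr j) = 0 →
      Contains (SimpleGraph.fromRel fun u v => GG.Adj u v ∧ c s(u,v) = 0)
        (SimpleGraph.pathGraph 3) := by
    intro i i' j hne hok hok' hc hc'
    apply contains_path 3 _
      (fun k => if k = 0 then Sum.inl i else if k = 1 then Sum.inr j else Sum.inl i')
    · intro a b ha hb hab
      interval_cases a <;> interval_cases b <;> simp_all
    · intro k hk
      have hk' : k < 2 := by omega
      interval_cases k
      · simpa using hadj0 i j hok hc
      · simpa using (hadj0 i' j hok' hc').symm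
  by_cases hA : ∃ (i : Fin 3) (j j' : Fin 4), j ≠ j' ∧ ¬(i = i0 ∧ j = j0) ∧ ¬(i = i0 ∧ j' = j0)
      ∧ c s(Sum.inl i, Sum.inr j) = 0 ∧ c s(Sum.inl i, Sum.inr j') = 0
  · left
    obtain ⟨i, j, j', hne, hok, hok', hc, hc'⟩ := hA
    apply contains_path 3 _
      (fun k => if k = 0 then Sum.inr j else if k = 1 then Sum.inl i else Sum.inr j')
    · intro a b ha hb hab
      interval_cases a <;> interval_cases b <;> simp_all
    · intro k hk
      have hk' : k < 2 := by omega
      interval_cases k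
      · simpa using (hadj0 i j hok hc).symm
      · simpa using hadj0 i j' hok' hc'
  · -- no two red edges in a row: pick the unique red column per row
    have hrex : ∀ i : Fin 3, ∃ ri : ℕ, ri < 5 ∧
        (∀ j : Fin 4, ¬(i = i0 ∧ j = j0) → c s(Sum.inl i, Sum.inr j) = 0 → ri = j.val) ∧
        (ri = 4 ∨ ∃ j : Fin 4, ri = j.val ∧ ¬(i = i0 ∧ j = j0) ∧
          c s(Sum.inl i, Sum.inr j) = 0) := by
      intro i
      by_cases h : ∃ j : Fin 4, ¬(i = i0 ∧ j = j0) ∧ c s(Sum.inl i, Sum.inr j) = 0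
      · obtain ⟨j, hok, hc⟩ := h
        refine ⟨j.val, by omega, ?_, Or.inr ⟨j, rfl, hok, hc⟩⟩
        intro j' hok' hc'
        by_contra hne
        exact hA ⟨i, j', j, fun hjj => hne (by rw [← hjj]), hok', hok, hc', hc⟩
      · exact ⟨4, by omega, fun j hok hc => absurd ⟨j, hok, hc⟩ h, Or.inl rfl⟩
    choose r hr5 hru hrw using hrex
    have hblue : ∀ (i : Fin 3) (j : Fin 4), ¬(i = i0 ∧ j = j0) → r i ≠ j.val →
        c s(Sum.inl i, Sum.inr j) = 1 := by
      intro i j hok hne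
      have h2 : c s(Sum.inl i, Sum.inr j) ≠ 0 := fun h0 => hne (hru i j hok h0)
      have h3 : ∀ x : Fin 2, x ≠ 0 → x = 1 := by decide
      exact h3 _ h2
    have hall := coreM
    simp only [List.all_eq_true, List.mem_range] at hall
    have hmc := hall (4*i0.val+j0.val) (by have := i0.isLt; have := j0.isLt; omega)
      (r 0) (hr5 0) (r 1) (hr5 1) (r 2) (hr5 2)
    have hgetr : ∀ i : Fin 3, [r 0, r 1, r 2].getD i.val 4 = r i := by
      intro i; fin_cases i <;> rfl
    -- helper to deal with the "duplicate column" cases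
    have hdup : ∀ i i' : Fin 3, i ≠ i' → r i = r i' → r i ≠ 4 →
        Contains (SimpleGraph.fromRel fun u v => GG.Adj u v ∧ c s(u,v) = 0)
          (SimpleGraph.pathGraph 3) := by
      intro i i' hii hrr hr4
      rcases hrw i with h4 | ⟨j, hj, hok, hc⟩
      · exact absurd h4 hr4
      rcases hrw i' with h4 | ⟨j', hj', hok', hc'⟩
      · rw [hrr] at hr4; exact absurd h4 hr4
      have hjj : j = j' := Fin.ext (by omega)
      subst hjj
      exact redcol i i' j hii hok hok' hc hc'
    simp only [mcheck, Bool.or_eq_true, Bool.and_eq_true, decide_eq_true_eq] at hmc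
    rcases hmc with ((⟨he1, he2⟩ | ⟨he1, he2⟩) | ⟨he1, he2⟩) | hb
    · exact Or.inl (hdup 0 1 (by decide) he1 he2)
    · exact Or.inl (hdup 0 2 (by decide) he1 he2)
    · exact Or.inl (hdup 1 2 (by decide) he1 he2)
    · -- blue hamiltonian path
      right
      simp only [bluem, List.any_eq_true, List.all_eq_true, List.mem_range] at hb
      obtain ⟨pa, hpa, pb, hpb, hed⟩ := hb
      obtain ⟨hpaB, hpaI⟩ := P3facts pa hpa
      obtain ⟨hpbB, hpbI⟩ := P4facts pb hpb
      have hed' : ∀ k, k < 3 →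
          ((4*(pa.getD k 0)+(pb.getD k 0) ≠ 4*i0.val+j0.val ∧
            [r 0, r 1, r 2].getD (pa.getD k 0) 4 ≠ pb.getD k 0) ∧
           (4*(pa.getD k 0)+(pb.getD (k+1) 0) ≠ 4*i0.val+j0.val ∧
            [r 0, r 1, r 2].getD (pa.getD k 0) 4 ≠ pb.getD (k+1) 0)) := by
        intro k hk
        have := hed k hk
        simpa only [edgeOk, Bool.and_eq_true, decide_eq_true_eq] using this
      set A : ℕ → Fin 3 := fun t => ⟨pa.getD t 0 % 3, Nat.mod_lt _ (by omega)⟩ with hA'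
      set B : ℕ → Fin 4 := fun t => ⟨pb.getD t 0 % 4, Nat.mod_lt _ (by omega)⟩ with hB'
      have hAval : ∀ t, t < 3 → (A t).val = pa.getD t 0 := fun t ht =>
        Nat.mod_eq_of_lt (hpaB t ht)
      have hBval : ∀ t, t < 4 → (B t).val = pb.getD t 0 := fun t ht =>
        Nat.mod_eq_of_lt (hpbB t ht)
      -- the generic blue edge
      have hedge : ∀ t s, t < 3 → s < 4 →
          (4*(pa.getD t 0)+(pb.getD s 0) ≠ 4*i0.val+j0.val) →
          ([r 0, r 1, r 2].getD (pa.getD t 0) 4 ≠ pb.getD s 0) →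
          (SimpleGraph.fromRel fun u v => GG.Adj u v ∧ c s(u,v) = 1).Adj
            (Sum.inl (A t)) (Sum.inr (B s)) := by
        intro t s ht hs h1 h2
        have hok : ¬(A t = i0 ∧ B s = j0) := by
          rintro ⟨hx, hy⟩
          apply h1
          have hx' := congrArg Fin.val hx
          have hy' := congrArg Fin.val hy
          rw [hAval t ht] at hx'
          rw [hBval s hs] at hy'
          omega
        apply hadj1 (A t) (B s) hok
        apply hblue (A t) (B s) hok
        have := hgetr (A t)
        rw [hAval t ht] at this
        rw [this] at h2
        rw [hBval s hs]
        exact h2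
      apply contains_path 7 _
        (fun k => if k % 2 = 0 then Sum.inr (B (k/2)) else Sum.inl (A (k/2)))
      · -- injectivity
        intro a b ha hb' hab
        rcases Nat.mod_two_eq_zero_or_one a with ha2 | ha2 <;>
          rcases Nat.mod_two_eq_zero_or_one b with hb2 | hb2
        · -- both even : B (a/2) = B (b/2)
          rw [if_pos ha2, if_pos hb2] at hab
          have hab' := Sum.inr.inj hab
          by_contra hne
          have hd : a / 2 ≠ b / 2 := by omega
          have := hpbI (a/2) (by omega) (b/2) (by omega) hd
          have hv := congrArg Fin.val hab'
          rw [hBval (a/2) (by omega), hBval (b/2) (by omega)] at hv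
          exact this hv
        · rw [if_pos ha2, if_neg (by omega)] at hab
          exact absurd hab (by simp)
        · rw [if_neg (by omega), if_pos hb2] at hab
          exact absurd hab (by simp)
        · -- both odd : A (a/2) = A (b/2)
          rw [if_neg (by omega), if_neg (by omega)] at hab
          have hab' := Sum.inl.inj hab
          by_contra hne
          have hd : a / 2 ≠ b / 2 := by omega
          have := hpaI (a/2) (by omega) (b/2) (by omega) hd
          have hv := congrArg Fin.val hab'
          rw [hAval (a/2) (by omega), hAval (b/2) (by omega)] at hv
          exact this hv
      · -- adjacency
        intro k hk
        rcases Nat.mod_two_eq_zero_or_one k with hk2 | hk2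
        · have h2 : (k+1)/2 = k/2 := by omega
          rw [if_pos hk2, if_neg (by omega), h2]
          have ht : k/2 < 3 := by omega
          exact (hedge (k/2) (k/2) ht (by omega) (hed' (k/2) ht).1.1 (hed' (k/2) ht).1.2).symm
        · have h2 : (k+1)/2 = k/2 + 1 := by omega
          rw [if_neg (by omega), if_pos (by omega), h2]
          have ht : k/2 < 3 := by omega
          exact hedge (k/2) (k/2+1) ht (by omega) (hed' (k/2) ht).2.1 (hed' (k/2) ht).2.2

end K34Aux

theorem K34_minus_edge_red_P3_or_blue_P7
    (e : Sym2 (Fin 3 ⊕ Fin 4))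
    (he : e ∈ (completeBipartiteGraph (Fin 3) (Fin 4)).edgeSet)
    (c : Sym2 (Fin 3 ⊕ Fin 4) → Fin 2) :
    let G := completeBipartiteGraph (Fin 3) (Fin 4) \ SimpleGraph.fromEdgeSet {e}
    Contains (SimpleGraph.fromRel (fun u v => G.Adj u v ∧ c s(u, v) = 0))
      (SimpleGraph.pathGraph 3) ∨
    Contains (SimpleGraph.fromRel (fun u v => G.Adj u v ∧ c s(u, v) = 1))
      (SimpleGraph.pathGraph 7) := by
  revert he
  induction e using Sym2.ind with
  | _ u v =>
  intro he
  rw [SimpleGraph.mem_edgeSet] at he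
  cases u with
  | inl i0 =>
    cases v with
    | inl i1 => simp at he
    | inr j0 =>
      exact K34Aux.main i0 j0 s(Sum.inl i0, Sum.inr j0)
        (by intro i j; simp [Sym2.eq_iff]; try tauto) c
  | inr j0 =>
    cases v with
    | inl i1 =>
      exact K34Aux.main i1 j0 s(Sum.inr j0, Sum.inl i1)
        (by intro i j; simp [Sym2.eq_iff]; try tauto) c
    | inr j1 => simp at he
end

section
/- Let m ≥ 7 and suppose the edges of K_{m+2} are 3-colored green, red, blue such that the blue subgraph contains a path on m-1 vertices. Then K_{m+2} contains a green P_3, a red P_7, or a blue P_m. -/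
open SimpleGraph

lemma contains_pathGraph_of_walk {V : Type*} (G : SimpleGraph V) (n : ℕ) (w : ℕ → V)
    (hinj : ∀ i j, i < n → j < n → w i = w j → i = j)
    (hadj : ∀ i, i + 1 < n → G.Adj (w i) (w (i + 1))) :
    Contains G (SimpleGraph.pathGraph n) := by
  refine ⟨⟨fun i => w i.val, ?_⟩, ?_⟩
  · intro a b hab
    rw [SimpleGraph.pathGraph_adj] at hab
    rcases hab with h | h
    · have h2 := hadj a.val (by omega)
      rwa [h] at h2
    · have h2 := hadj b.val (by omega)
      rw [h] at h2
      exact h2.symm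
  · intro a b h
    exact Fin.ext (hinj a.val b.val a.isLt b.isLt h)

lemma contains_path_insert {V : Type*} (G : SimpleGraph V) (m : ℕ) (hm : 2 ≤ m)
    (v : ℕ → V) (t : V)
    (hvinj : ∀ i j, i ≤ m - 2 → j ≤ m - 2 → v i = v j → i = j)
    (ht : ∀ i, i ≤ m - 2 → v i ≠ t)
    (hpath : ∀ i, i + 1 ≤ m - 2 → G.Adj (v i) (v (i + 1)))
    (k : ℕ) (hk : k ≤ m - 1)
    (hl : 0 < k → G.Adj (v (k - 1)) t)
    (hr : k < m - 1 → G.Adj t (v k)) :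
    Contains G (SimpleGraph.pathGraph m) := by
  set w : ℕ → V := fun j => if j < k then v j else if j = k then t else v (j - 1) with hw
  have hwlt : ∀ j, j < k → w j = v j := by intro j h; simp [hw, h]
  have hweq : w k = t := by simp [hw]
  have hwgt : ∀ j, k < j → w j = v (j - 1) := by
    intro j h
    simp only [hw, if_neg (by omega : ¬ j < k), if_neg (by omega : ¬ j = k)]
  apply contains_pathGraph_of_walk G m w
  · intro i j hi hj h
    rcases lt_trichotomy i k with hik | hik | hik <;>
      rcases lt_trichotomy j k with hjk | hjk | hjk
    · rw [hwlt i hik, hwlt j hjk] at h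
      exact hvinj i j (by omega) (by omega) h
    · subst hjk; rw [hwlt i hik, hweq] at h
      exact absurd h (ht i (by omega))
    · rw [hwlt i hik, hwgt j hjk] at h
      have := hvinj i (j - 1) (by omega) (by omega) h
      omega
    · subst hik; rw [hweq, hwlt j hjk] at h
      exact absurd h.symm (ht j (by omega))
    · omega
    · subst hik; rw [hweq, hwgt j hjk] at h
      exact absurd h.symm (ht (j - 1) (by omega))
    · rw [hwgt i hik, hwlt j hjk] at h
      have := hvinj (i - 1) j (by omega) (by omega) h
      omega
    · subst hjk; rw [hwgt i hik, hweq] at h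
      exact absurd h (ht (i - 1) (by omega))
    · rw [hwgt i hik, hwgt j hjk] at h
      have := hvinj (i - 1) (j - 1) (by omega) (by omega) h
      omega
  · intro i hi
    rcases lt_trichotomy (i + 1) k with hik | hik | hik
    · rw [hwlt i (by omega), hwlt (i + 1) hik]
      exact hpath i (by omega)
    · rw [hwlt i (by omega), hik, hweq]
      have h2 := hl (by omega)
      have h3 : k - 1 = i := by omega
      rwa [h3] at h2
    · rcases lt_trichotomy i k with h2 | h2 | h2
      · omega
      · subst h2
        rw [hweq, hwgt (i + 1) hik]
        have h3 : i + 1 - 1 = i := by omega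
        rw [h3]
        exact hr (by omega)
      · rw [hwgt i h2, hwgt (i + 1) (by omega)]
        have h3 := hpath (i - 1) (by omega)
        have h4 : i - 1 + 1 = i := by omega
        rwa [h4] at h3

lemma contains_P3 {V : Type*} (G : SimpleGraph V) (a b d : V)
    (hab : G.Adj a b) (hbd : G.Adj b d) (had : a ≠ d) :
    Contains G (SimpleGraph.pathGraph 3) := by
  apply contains_pathGraph_of_walk G 3 (fun i => if i = 0 then a else if i = 1 then b else d)
  · have h1 := hab.ne
    have h2 := hbd.ne
    intro i j hi hj h
    interval_cases i <;> interval_cases j <;> simp_all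
  · intro i hi
    have hi2 : i < 2 := by omega
    interval_cases i <;> simpa

lemma contains_P7 {V : Type*} (G : SimpleGraph V) (w0 w1 w2 w3 w4 w5 w6 : V)
    (a01 : G.Adj w0 w1) (a12 : G.Adj w1 w2) (a23 : G.Adj w2 w3) (a34 : G.Adj w3 w4)
    (a45 : G.Adj w4 w5) (a56 : G.Adj w5 w6)
    (n02 : w0 ≠ w2) (n03 : w0 ≠ w3) (n04 : w0 ≠ w4) (n05 : w0 ≠ w5) (n06 : w0 ≠ w6)
    (n13 : w1 ≠ w3) (n14 : w1 ≠ w4) (n15 : w1 ≠ w5) (n16 : w1 ≠ w6)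
    (n24 : w2 ≠ w4) (n25 : w2 ≠ w5) (n26 : w2 ≠ w6)
    (n35 : w3 ≠ w5) (n36 : w3 ≠ w6) (n46 : w4 ≠ w6) :
    Contains G (SimpleGraph.pathGraph 7) := by
  apply contains_pathGraph_of_walk G 7
    (fun i => if i = 0 then w0 else if i = 1 then w1 else if i = 2 then w2 else if i = 3 then w3
      else if i = 4 then w4 else if i = 5 then w5 else w6)
  · have h1 := a01.ne
    have h2 := a12.ne
    have h3 := a23.ne
    have h4 := a34.ne
    have h5 := a45.ne
    have h6 := a56.ne
    intro i j hi hj h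
    interval_cases i <;> interval_cases j <;> simp_all
  · intro i hi
    have hi2 : i < 6 := by omega
    interval_cases i <;> simpa


theorem blue_Pm_minus_one_extension (m : ℕ) (hm : 7 ≤ m)
    (c : Sym2 (Fin (m + 2)) → Fin 3)
    (hblue : Contains (colorClass c 2) (SimpleGraph.pathGraph (m - 1))) :
    Contains (colorClass c 0) (SimpleGraph.pathGraph 3) ∨
    Contains (colorClass c 1) (SimpleGraph.pathGraph 7) ∨
    Contains (colorClass c 2) (SimpleGraph.pathGraph m) := by
  by_contra hcon
  push_neg at hcon
  obtain ⟨hg, hr, hb⟩ := hcon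
  obtain ⟨f, hf⟩ := hblue
  -- basic color facts
  have hadj_iff : ∀ (i : Fin 3) (u w : Fin (m + 2)),
      (colorClass c i).Adj u w ↔ u ≠ w ∧ c s(u, w) = i := by
    intro i u w
    constructor
    · intro h
      rw [colorClass, SimpleGraph.fromRel_adj] at h
      obtain ⟨h1, h2 | h2⟩ := h
      · exact ⟨h1, h2⟩
      · rw [Sym2.eq_swap]; exact ⟨h1, h2⟩
    · intro ⟨h1, h2⟩
      rw [colorClass, SimpleGraph.fromRel_adj]
      exact ⟨h1, Or.inl h2⟩
  have htri : ∀ u w : Fin (m + 2), u ≠ w →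
      (colorClass c 0).Adj u w ∨ (colorClass c 1).Adj u w ∨ (colorClass c 2).Adj u w := by
    intro u w h
    have h3 : ∀ x : Fin 3, x = 0 ∨ x = 1 ∨ x = 2 := by decide
    rcases h3 (c s(u, w)) with h4 | h4 | h4
    · exact Or.inl ((hadj_iff 0 u w).2 ⟨h, h4⟩)
    · exact Or.inr (Or.inl ((hadj_iff 1 u w).2 ⟨h, h4⟩))
    · exact Or.inr (Or.inr ((hadj_iff 2 u w).2 ⟨h, h4⟩))
  have hg2 : ∀ a b d : Fin (m + 2), a ≠ d →
      (colorClass c 0).Adj a b → (colorClass c 0).Adj b d → False := by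
    intro a b d h1 h2 h3
    exact hg (contains_P3 _ a b d h2 h3 h1)
  -- the blue path
  have hv0 : ∀ i : ℕ, min i (m - 2) < m - 1 := by omega
  set v : ℕ → Fin (m + 2) := fun i => f ⟨min i (m - 2), hv0 i⟩ with hvdef
  have hv : ∀ i, i ≤ m - 2 → ∀ h : i < m - 1, v i = f ⟨i, h⟩ := by
    intro i hi h
    exact congrArg f (Fin.ext (show min i (m - 2) = i by omega))
  have hvinj : ∀ i j, i ≤ m - 2 → j ≤ m - 2 → v i = v j → i = j := by
    intro i j hi hj h
    rw [hv i hi (by omega), hv j hj (by omega)] at h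
    exact congrArg Fin.val (hf h)
  have hvne : ∀ i j, i ≤ m - 2 → j ≤ m - 2 → i ≠ j → v i ≠ v j :=
    fun i j hi hj hij h => hij (hvinj i j hi hj h)
  have hvadj : ∀ i, i + 1 ≤ m - 2 → (colorClass c 2).Adj (v i) (v (i + 1)) := by
    intro i hi
    rw [hv i (by omega) (by omega), hv (i + 1) (by omega) (by omega)]
    exact f.map_adj (by rw [SimpleGraph.pathGraph_adj]; left; rfl)
  -- the three outside vertices
  set S : Finset (Fin (m + 2)) := (Finset.range (m - 1)).image v with hSdef
  have hScard : S.card = m - 1 := by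
    rw [hSdef, Finset.card_image_of_injOn, Finset.card_range]
    intro i hi j hj h
    rw [Finset.mem_coe, Finset.mem_range] at hi hj
    exact hvinj i j (by omega) (by omega) h
  have hCcard : Sᶜ.card = 3 := by
    rw [Finset.card_compl, hScard]
    have : Fintype.card (Fin (m + 2)) = m + 2 := Fintype.card_fin _
    omega
  obtain ⟨a, b, d, hab, had, hbd, hS3⟩ := Finset.card_eq_three.1 hCcard
  have hout : ∀ t, t ∈ Sᶜ → ∀ i, i ≤ m - 2 → v i ≠ t := by
    intro t htc i hi h
    rw [Finset.mem_compl] at htc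
    exact htc (h ▸ Finset.mem_image_of_mem v (Finset.mem_range.2 (by omega)))
  have houta : ∀ i, i ≤ m - 2 → v i ≠ a := hout a (by rw [hS3]; simp)
  have houtb : ∀ i, i ≤ m - 2 → v i ≠ b := hout b (by rw [hS3]; simp)
  have houtd : ∀ i, i ≤ m - 2 → v i ≠ d := hout d (by rw [hS3]; simp)
  -- no blue from outside vertices to path ends / consecutive insertion
  have hnb0 : ∀ t, (∀ i, i ≤ m - 2 → v i ≠ t) → ¬(colorClass c 2).Adj t (v 0) := by
    intro t ht hadj
    exact hb (contains_path_insert _ m (by omega) v t hvinj ht hvadj 0 (by omega)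
      (fun h => absurd h (by omega)) (fun _ => hadj))
  have hnbl : ∀ t, (∀ i, i ≤ m - 2 → v i ≠ t) → ¬(colorClass c 2).Adj (v (m - 2)) t := by
    intro t ht hadj
    refine hb (contains_path_insert _ m (by omega) v t hvinj ht hvadj (m - 1) (by omega)
      (fun _ => ?_) (fun h => absurd h (by omega)))
    have h2 : m - 1 - 1 = m - 2 := by omega
    rwa [h2]
  have hnbi : ∀ t, (∀ i, i ≤ m - 2 → v i ≠ t) → ∀ i, i + 1 ≤ m - 2 →
      (colorClass c 2).Adj (v i) t → (colorClass c 2).Adj t (v (i + 1)) → False := by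
    intro t ht i hi h1 h2
    refine hb (contains_path_insert _ m (by omega) v t hvinj ht hvadj (i + 1) (by omega)
      (fun _ => ?_) (fun _ => h2))
    have h3 : i + 1 - 1 = i := by omega
    rwa [h3]
  -- of three edges at a vertex, two get the same of two properties (no two greens)
  have pair_of : ∀ (t1 t2 t3 w : Fin (m + 2)) (Q : Fin (m + 2) → Prop),
      t1 ≠ t2 → t1 ≠ t3 → t2 ≠ t3 →
      ((colorClass c 0).Adj w t1 ∨ Q t1) → ((colorClass c 0).Adj w t2 ∨ Q t2) →
      ((colorClass c 0).Adj w t3 ∨ Q t3) →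
      (Q t1 ∧ Q t2) ∨ (Q t2 ∧ Q t3) ∨ (Q t1 ∧ Q t3) := by
    intro t1 t2 t3 w Q h12 h13 h23 h1 h2 h3
    rcases h1 with h1 | h1
    · rcases h2 with h2 | h2
      · exact (hg2 t1 w t2 h12 h1.symm h2).elim
      · rcases h3 with h3 | h3
        · exact (hg2 t1 w t3 h13 h1.symm h3).elim
        · exact Or.inr (Or.inl ⟨h2, h3⟩)
    · rcases h2 with h2 | h2
      · rcases h3 with h3 | h3
        · exact (hg2 t2 w t3 h23 h2.symm h3).elim
        · exact Or.inr (Or.inr ⟨h1, h3⟩)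
      · exact Or.inl ⟨h1, h2⟩
  -- every outside vertex has a red neighbor among v 1 .. v 4
  have hC1 : ∀ t, (∀ i, i ≤ m - 2 → v i ≠ t) →
      ∃ i, 1 ≤ i ∧ i ≤ 4 ∧ (colorClass c 1).Adj (v i) t := by
    intro t ht
    have key : ∀ i, 1 ≤ i → i + 1 ≤ 4 →
        ∃ j, i ≤ j ∧ j ≤ i + 1 ∧ ¬(colorClass c 2).Adj (v j) t := by
      intro i h1 h4
      by_cases hB : (colorClass c 2).Adj (v i) t
      · exact ⟨i + 1, by omega, by omega, fun h => hnbi t ht i (by omega) hB h.symm⟩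
      · exact ⟨i, by omega, by omega, hB⟩
    obtain ⟨j1, hj1a, hj1b, hb1⟩ := key 1 (by omega) (by omega)
    obtain ⟨j2, hj2a, hj2b, hb2⟩ := key 3 (by omega) (by omega)
    rcases htri (v j1) t (ht j1 (by omega)) with h1 | h1 | h1
    · rcases htri (v j2) t (ht j2 (by omega)) with h2 | h2 | h2
      · exact (hg2 (v j1) t (v j2) (hvne j1 j2 (by omega) (by omega) (by omega)) h1 h2.symm).elim
      · exact ⟨j2, by omega, by omega, h2⟩
      · exact (hb2 h2).elim
    · exact ⟨j1, by omega, by omega, h1⟩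
    · exact (hb1 h1).elim
  -- the main argument, given suitably labelled outside vertices
  have main : ∀ x y z : Fin (m + 2), x ≠ y → x ≠ z → y ≠ z →
      (∀ i, i ≤ m - 2 → v i ≠ x) → (∀ i, i ≤ m - 2 → v i ≠ y) → (∀ i, i ≤ m - 2 → v i ≠ z) →
      (colorClass c 1).Adj (v 0) x → (colorClass c 1).Adj (v 0) y →
      (colorClass c 1).Adj (v (m - 2)) y → (colorClass c 1).Adj (v (m - 2)) z → False := by
    intro x y z hxy hxz hyz hx hy hz r0x r0y rly rlz
    obtain ⟨ip, hip1, hip4, hpz⟩ := hC1 z hz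
    by_cases hq : ∃ j, 1 ≤ j ∧ j ≤ m - 3 ∧ v j ≠ v ip ∧ (colorClass c 1).Adj (v j) x
    · obtain ⟨j, hj1, hj3, hjp, hjx⟩ := hq
      exact hr (contains_P7 _ (v j) x (v 0) y (v (m - 2)) z (v ip)
        hjx r0x.symm r0y rly.symm rlz hpz.symm
        (hvne j 0 (by omega) (by omega) (by omega))
        (hy j (by omega)) (hvne j (m - 2) (by omega) (by omega) (by omega))
        (hz j (by omega)) hjp
        hxy ((hx (m - 2) (by omega)).symm) hxz ((hx ip (by omega)).symm)
        (hvne 0 (m - 2) (by omega) (by omega) (by omega)) (hz 0 (by omega))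
        (hvne 0 ip (by omega) (by omega) (by omega))
        hyz ((hy ip (by omega)).symm)
        (hvne (m - 2) ip (by omega) (by omega) (by omega)))
    · push_neg at hq
      have hpx : (colorClass c 1).Adj (v ip) x := by
        obtain ⟨j', h1, h4, hj'x⟩ := hC1 x hx
        by_cases he : v j' = v ip
        · rwa [he] at hj'x
        · exact (hq j' h1 (by omega) he hj'x).elim
      by_cases hrY : ∃ j, 1 ≤ j ∧ j ≤ m - 3 ∧ v j ≠ v ip ∧ (colorClass c 1).Adj (v j) y
      · obtain ⟨j, hj1, hj3, hjp, hjy⟩ := hrY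
        exact hr (contains_P7 _ (v (m - 2)) z (v ip) x (v 0) y (v j)
          rlz hpz.symm hpx r0x.symm r0y hjy.symm
          (hvne (m - 2) ip (by omega) (by omega) (by omega))
          (hx (m - 2) (by omega)) (hvne (m - 2) 0 (by omega) (by omega) (by omega))
          (hy (m - 2) (by omega)) (hvne (m - 2) j (by omega) (by omega) (by omega))
          hxz.symm ((hz 0 (by omega)).symm) hyz.symm ((hz j (by omega)).symm)
          (hvne ip 0 (by omega) (by omega) (by omega)) (hy ip (by omega)) hjp.symm
          hxy ((hx j (by omega)).symm)
          (hvne 0 j (by omega) (by omega) (by omega)))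
      · push_neg at hrY
        by_cases hrZ : ∃ j, 1 ≤ j ∧ j ≤ m - 3 ∧ v j ≠ v ip ∧ (colorClass c 1).Adj (v j) z
        · obtain ⟨j, hj1, hj3, hjp, hjz⟩ := hrZ
          exact hr (contains_P7 _ (v ip) x (v 0) y (v (m - 2)) z (v j)
            hpx r0x.symm r0y rly.symm rlz hjz.symm
            (hvne ip 0 (by omega) (by omega) (by omega))
            (hy ip (by omega)) (hvne ip (m - 2) (by omega) (by omega) (by omega))
            (hz ip (by omega)) hjp.symm
            hxy ((hx (m - 2) (by omega)).symm) hxz ((hx j (by omega)).symm)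
            (hvne 0 (m - 2) (by omega) (by omega) (by omega)) (hz 0 (by omega))
            (hvne 0 j (by omega) (by omega) (by omega))
            hyz ((hy j (by omega)).symm)
            (hvne (m - 2) j (by omega) (by omega) (by omega)))
        · push_neg at hrZ
          have hpair : ∃ j, 1 ≤ j ∧ j + 1 ≤ 4 ∧ v j ≠ v ip ∧ v (j + 1) ≠ v ip := by
            by_cases h1 : v 1 = v ip
            · refine ⟨3, by omega, by omega, fun h => ?_, fun h => ?_⟩
              · have e1 := hvinj 3 ip (by omega) (by omega) h
                have e2 := hvinj 1 ip (by omega) (by omega) h1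
                omega
              · have e1 := hvinj 4 ip (by omega) (by omega) h
                have e2 := hvinj 1 ip (by omega) (by omega) h1
                omega
            · by_cases h2 : v 2 = v ip
              · refine ⟨3, by omega, by omega, fun h => ?_, fun h => ?_⟩
                · have e1 := hvinj 3 ip (by omega) (by omega) h
                  have e2 := hvinj 2 ip (by omega) (by omega) h2
                  omega
                · have e1 := hvinj 4 ip (by omega) (by omega) h
                  have e2 := hvinj 2 ip (by omega) (by omega) h2
                  omega
              · exact ⟨1, by omega, by omega, h1, h2⟩
          obtain ⟨j, hj1, hj4, hne1, hne2⟩ := hpair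
          have hblue2 : ∀ u, 1 ≤ u → u ≤ 4 → v u ≠ v ip →
              ((colorClass c 2).Adj (v u) x ∧ (colorClass c 2).Adj (v u) y) ∨
              ((colorClass c 2).Adj (v u) y ∧ (colorClass c 2).Adj (v u) z) ∨
              ((colorClass c 2).Adj (v u) x ∧ (colorClass c 2).Adj (v u) z) := by
            intro u hu1 hu4 hup
            refine pair_of x y z (v u) _ hxy hxz hyz ?_ ?_ ?_
            · rcases htri (v u) x (hx u (by omega)) with h | h | h
              · exact Or.inl h
              · exact (hq u hu1 (by omega) hup h).elim
              · exact Or.inr h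
            · rcases htri (v u) y (hy u (by omega)) with h | h | h
              · exact Or.inl h
              · exact (hrY u hu1 (by omega) hup h).elim
              · exact Or.inr h
            · rcases htri (v u) z (hz u (by omega)) with h | h | h
              · exact Or.inl h
              · exact (hrZ u hu1 (by omega) hup h).elim
              · exact Or.inr h
          have hb1 := hblue2 j (by omega) (by omega) hne1
          have hb2 := hblue2 (j + 1) (by omega) (by omega) hne2
          have hcommon : ∃ t, (∀ i, i ≤ m - 2 → v i ≠ t) ∧
              (colorClass c 2).Adj (v j) t ∧ (colorClass c 2).Adj (v (j + 1)) t := by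
            rcases hb1 with ⟨u1, u2⟩ | ⟨u1, u2⟩ | ⟨u1, u2⟩ <;>
              rcases hb2 with ⟨w1, w2⟩ | ⟨w1, w2⟩ | ⟨w1, w2⟩
            · exact ⟨x, hx, u1, w1⟩
            · exact ⟨y, hy, u2, w1⟩
            · exact ⟨x, hx, u1, w1⟩
            · exact ⟨y, hy, u1, w2⟩
            · exact ⟨y, hy, u1, w1⟩
            · exact ⟨z, hz, u2, w2⟩
            · exact ⟨x, hx, u1, w1⟩
            · exact ⟨z, hz, u2, w2⟩
            · exact ⟨x, hx, u1, w1⟩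
          obtain ⟨t, ht, hbt1, hbt2⟩ := hcommon
          exact hnbi t ht j (by omega) hbt1 hbt2.symm
  -- endpoints: every edge to an outside vertex is green or red
  have hend : ∀ t, (∀ i, i ≤ m - 2 → v i ≠ t) →
      ((colorClass c 0).Adj (v 0) t ∨ (colorClass c 1).Adj (v 0) t) ∧
      ((colorClass c 0).Adj (v (m - 2)) t ∨ (colorClass c 1).Adj (v (m - 2)) t) := by
    intro t ht
    constructor
    · rcases htri (v 0) t (ht 0 (by omega)) with h | h | h
      · exact Or.inl h
      · exact Or.inr h
      · exact (hnb0 t ht h.symm).elim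
    · rcases htri (v (m - 2)) t (ht (m - 2) (by omega)) with h | h | h
      · exact Or.inl h
      · exact Or.inr h
      · exact (hnbl t ht h).elim
  have hne0l : v 0 ≠ v (m - 2) := hvne 0 (m - 2) (by omega) (by omega) (by omega)
  have h0 := pair_of a b d (v 0) (fun t => (colorClass c 1).Adj (v 0) t) hab had hbd
    (hend a houta).1 (hend b houtb).1 (hend d houtd).1
  have h1 := pair_of a b d (v (m - 2)) (fun t => (colorClass c 1).Adj (v (m - 2)) t) hab had hbd
    (hend a houta).2 (hend b houtb).2 (hend d houtd).2
  rcases h0 with ⟨p1, p2⟩ | ⟨p1, p2⟩ | ⟨p1, p2⟩ <;> rcases h1 with ⟨q1, q2⟩ | ⟨q1, q2⟩ | ⟨q1, q2⟩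
  -- (ab, ab)
  · rcases (hend d houtd).1 with g0 | r0
    · rcases (hend d houtd).2 with g1 | r1
      · exact (hg2 (v 0) d (v (m - 2)) hne0l g0 g1.symm).elim
      · exact main a b d hab had hbd houta houtb houtd p1 p2 q2 r1
    · exact main d a b had.symm hbd.symm hab houtd houta houtb r0 p1 q1 q2
  -- (ab, bd)
  · exact main a b d hab had hbd houta houtb houtd p1 p2 q1 q2
  -- (ab, ad)
  · exact main b a d hab.symm hbd had houtb houta houtd p2 p1 q1 q2
  -- (bd, ab)
  · exact main d b a hbd.symm had.symm hab.symm houtd houtb houta p2 p1 q2 q1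
  -- (bd, bd)
  · rcases (hend a houta).1 with g0 | r0
    · rcases (hend a houta).2 with g1 | r1
      · exact (hg2 (v 0) a (v (m - 2)) hne0l g0 g1.symm).elim
      · exact main b d a hbd hab.symm had.symm houtb houtd houta p1 p2 q2 r1
    · exact main a d b had hab hbd.symm houta houtd houtb r0 p2 q2 q1
  -- (bd, ad)
  · exact main b d a hbd hab.symm had.symm houtb houtd houta p1 p2 q2 q1
  -- (ad, ab)
  · exact main d a b had.symm hbd.symm hab houtd houta houtb p2 p1 q1 q2
  -- (ad, bd)
  · exact main a d b had hab hbd.symm houta houtd houtb p1 p2 q2 q1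
  -- (ad, ad)
  · rcases (hend b houtb).1 with g0 | r0
    · rcases (hend b houtb).2 with g1 | r1
      · exact (hg2 (v 0) b (v (m - 2)) hne0l g0 g1.symm).elim
      · exact main a d b had hab hbd.symm houta houtd houtb p1 p2 q2 r1
    · exact main b a d hab.symm hbd had houtb houta houtd r0 p1 q1 q2
end
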